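/- arXiv:1911.06770 — 7 statements merged into one kernel-verified Lean document; each statement's English description precedes it below -/
import Mathlib

section
/- Let φ : ℝ → ℝ be Lipschitz continuous and J̄ ≥ 0 with J̄ < φ(1). Then there exists δ ∈ (0,1) such that every solution G : [0,∞) → ℝ of the two-state grass–forest generalized Kolmogorov equation G' = (1−G)φ(G) − J̄ G(1−G) with G(0) ∈ (1−δ, 1] is nondecreasing, remains in (1−δ,1], and satisfies G(t) → 1 as t → ∞; i.e., the all-grass equilibrium is locally asymptotically stable when the forest birth rate is below the forest mortality at full grass cover. -/
open Set Filter

/-- Monotonicity on a subinterval of `[0,∞)` from a nonnegative right derivative. -/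
lemma aux_monotoneOn (f f' : ℝ → ℝ)
    (hf : ∀ t ∈ Ici (0:ℝ), HasDerivWithinAt f (f' t) (Ici 0) t)
    {a b : ℝ} (ha : 0 ≤ a)
    (hnn : ∀ t ∈ Icc a b, 0 ≤ f' t) : MonotoneOn f (Icc a b) := by
  apply monotoneOn_of_deriv_nonneg (convex_Icc a b)
  · exact fun t ht => ((hf t (ha.trans ht.1)).continuousWithinAt).mono
      (fun x hx => ha.trans hx.1)
  · rw [interior_Icc]
    intro t ht
    have h0 : (0:ℝ) < t := lt_of_le_of_lt ha ht.1
    exact (((hf t h0.le).hasDerivAt (Ici_mem_nhds h0)).differentiableAt).differentiableWithinAt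
  · rw [interior_Icc]
    intro t ht
    have h0 : (0:ℝ) < t := lt_of_le_of_lt ha ht.1
    have := ((hf t h0.le).hasDerivAt (Ici_mem_nhds h0)).deriv
    rw [this]
    exact hnn t (Ioo_subset_Icc_self ht)

/-- If the forest birth rate `J̄` is below the forest mortality `φ(1)` at
full grass cover, then the all-grass equilibrium `G = 1` of the grass-forest generalized
Kolmogorov equation `G' = (1−G)φ(G) − J̄ G(1−G)` is locally asymptotically stable: there is
`δ ∈ (0,1)` such that any solution starting in `(1−δ, 1]` is nondecreasing, remains in
`(1−δ, 1]`, and converges to `1`. -/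
theorem all_grass_locally_stable
    (φ : ℝ → ℝ) (K : NNReal) (hφ : LipschitzWith K φ)
    (J : ℝ) (hJ0 : 0 ≤ J) (hJ : J < φ 1) :
    ∃ δ ∈ Ioo (0:ℝ) 1, ∀ G : ℝ → ℝ,
      (∀ t ∈ Ici (0:ℝ), HasDerivWithinAt G
        ((1 - G t) * φ (G t) - J * G t * (1 - G t)) (Ici 0) t) →
      G 0 ∈ Ioc (1 - δ) 1 →
      MonotoneOn G (Ici 0) ∧ (∀ t ∈ Ici (0:ℝ), G t ∈ Ioc (1 - δ) 1) ∧
        Tendsto G atTop (nhds 1) := by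
  set c : ℝ := (φ 1 - J) / 2 with hc_def
  have hc : 0 < c := by simp only [hc_def]; linarith
  have hK1 : (0:ℝ) < (K:ℝ) + 1 := by positivity
  set δ : ℝ := min (1/2) (c / ((K:ℝ) + 1)) with hδ_def
  have hδ0 : 0 < δ := lt_min (by norm_num) (by positivity)
  have hδ1 : δ < 1 := lt_of_le_of_lt (min_le_left _ _) (by norm_num)
  have hKδ : (K:ℝ) * δ ≤ c := by
    have h1 : δ ≤ c / ((K:ℝ) + 1) := min_le_right _ _
    have h2 : δ * ((K:ℝ) + 1) ≤ c := (le_div_iff₀ hK1).1 h1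
    nlinarith [K.coe_nonneg, hδ0.le]
  -- key estimate: on [1-δ, 1], φ(x) - Jx ≥ c > 0
  have hkey : ∀ x : ℝ, 1 - δ ≤ x → x ≤ 1 → c ≤ φ x - J * x := by
    intro x hx1 hx2
    have hd := hφ.dist_le_mul x 1
    rw [Real.dist_eq, Real.dist_eq] at hd
    have habs : |x - 1| ≤ δ := by
      rw [abs_le]; constructor <;> linarith
    have h1 : φ 1 - φ x ≤ (K:ℝ) * δ := by
      have := abs_le.1 hd
      have hKx : (K:ℝ) * |x - 1| ≤ (K:ℝ) * δ :=
        mul_le_mul_of_nonneg_left habs K.coe_nonneg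
      have := neg_le_of_abs_le hd
      linarith
    have h2 : J * x ≤ J := by nlinarith
    have : φ 1 - J = 2 * c := by simp only [hc_def]; ring
    linarith
  refine ⟨δ, ⟨hδ0, hδ1⟩, ?_⟩
  intro G hG hG0
  set f' : ℝ → ℝ := fun t => (1 - G t) * φ (G t) - J * G t * (1 - G t) with hf'_def
  have hf'_eq : ∀ t, f' t = (1 - G t) * (φ (G t) - J * G t) := by
    intro t; simp only [hf'_def]; ring
  have contG : ContinuousOn G (Ici 0) := fun t ht => (hG t ht).continuousWithinAt
  -- Step 1: G t ≤ 1 for all t ≥ 0 (Grönwall uniqueness argument)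
  have hub : ∀ t ∈ Ici (0:ℝ), G t ≤ 1 := by
    intro t1 ht1
    by_contra hlt
    push_neg at hlt
    set S : Set ℝ := {t ∈ Icc 0 t1 | G t ≤ 1} with hS_def
    have hScomp : IsCompact S := by
      apply isCompact_Icc.of_isClosed_subset
      · have : ContinuousOn G (Icc 0 t1) := contG.mono (fun x hx => hx.1)
        exact this.preimage_isClosed_of_isClosed isClosed_Icc isClosed_Iic
      · exact fun x hx => hx.1
    have hSne : S.Nonempty := ⟨0, ⟨le_refl 0, ht1⟩, hG0.2⟩
    set t0 : ℝ := sSup S with ht0_def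
    have ht0S : t0 ∈ S := hScomp.sSup_mem hSne
    have ht0_mem : t0 ∈ Icc 0 t1 := ht0S.1
    have ht0_lt : t0 < t1 := lt_of_le_of_ne ht0_mem.2 (by
      intro h; rw [h] at ht0S; exact absurd ht0S.2 (not_le.2 hlt))
    have h_gt : ∀ t ∈ Ioc t0 t1, 1 < G t := by
      intro t ht
      by_contra h
      push_neg at h
      have : t ∈ S := ⟨⟨ht0_mem.1.trans ht.1.le, ht.2⟩, h⟩
      exact absurd (le_csSup hScomp.bddAbove this) (not_le.2 ht.1)
    have hGt0 : G t0 = 1 := by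
      refine le_antisymm ht0S.2 ?_
      have hsub : Ioc t0 t1 ⊆ Ici (0:ℝ) := fun x hx => ht0_mem.1.trans hx.1.le
      have htend : Tendsto G (nhdsWithin t0 (Ioc t0 t1)) (nhds (G t0)) :=
        ((contG t0 ht0_mem.1).mono hsub).tendsto
      have hne : (nhdsWithin t0 (Ioc t0 t1)).NeBot := by
        rw [← mem_closure_iff_nhdsWithin_neBot, closure_Ioc ht0_lt.ne]
        exact left_mem_Icc.2 ht0_lt.le
      refine ge_of_tendsto htend ?_
      filter_upwards [eventually_mem_nhdsWithin] with x hx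
      exact (h_gt x hx).le
    -- Grönwall: h = G - 1 vanishes at t0, |h'| ≤ M|h|, hence h ≡ 0 on [t0,t1]
    have hacont : ContinuousOn (fun t => φ (G t) - J * G t) (Icc t0 t1) := by
      have hGcont : ContinuousOn G (Icc t0 t1) :=
        contG.mono (fun x hx => ht0_mem.1.trans hx.1)
      exact (hφ.continuous.comp_continuousOn hGcont).sub (continuousOn_const.mul hGcont)
    obtain ⟨M, hM⟩ := isCompact_Icc.exists_bound_of_continuousOn hacont
    have key := norm_le_gronwallBound_of_norm_deriv_right_le
      (f := fun t => G t - 1) (f' := f') (δ := 0) (K := M) (ε := 0) (a := t0) (b := t1)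
      (by
        exact ((contG.mono (fun x (hx : x ∈ Icc t0 t1) => ht0_mem.1.trans hx.1)).sub
          continuousOn_const))
      (by
        intro x hx
        have hx0 : (0:ℝ) ≤ x := ht0_mem.1.trans hx.1
        exact ((hG x hx0).sub_const 1).mono (Ici_subset_Ici.2 hx0))
      (by simp [hGt0])
      (by
        intro x hx
        have hxIcc : x ∈ Icc t0 t1 := ⟨hx.1, hx.2.le⟩
        have h1 : ‖f' x‖ = ‖G x - 1‖ * ‖φ (G x) - J * G x‖ := by
          rw [hf'_eq, norm_mul, norm_sub_rev]
        rw [h1, add_zero, mul_comm]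
        exact mul_le_mul_of_nonneg_right (hM x hxIcc) (norm_nonneg _))
    have := key t1 ⟨ht0_lt.le, le_refl t1⟩
    rw [gronwallBound_ε0, zero_mul] at this
    rw [Real.norm_eq_abs] at this
    have h2 := abs_le.1 this
    have h3 : G t1 - 1 ≤ 0 := h2.2
    linarith
  -- Step 2: 1 - δ < G t for all t ≥ 0
  have hlb : ∀ t ∈ Ici (0:ℝ), 1 - δ < G t := by
    intro t1 ht1
    by_contra hle
    push_neg at hle
    set S : Set ℝ := {t ∈ Icc 0 t1 | G t ≤ 1 - δ} with hS_def
    have hScomp : IsCompact S := by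
      apply isCompact_Icc.of_isClosed_subset
      · have : ContinuousOn G (Icc 0 t1) := contG.mono (fun x hx => hx.1)
        exact this.preimage_isClosed_of_isClosed isClosed_Icc isClosed_Iic
      · exact fun x hx => hx.1
    have hSne : S.Nonempty := ⟨t1, ⟨ht1, le_refl t1⟩, hle⟩
    set t0 : ℝ := sInf S with ht0_def
    have ht0S : t0 ∈ S := hScomp.sInf_mem hSne
    have ht0_mem : t0 ∈ Icc 0 t1 := ht0S.1
    have ht0_pos : 0 < t0 := lt_of_le_of_ne ht0_mem.1 (by
      intro h
      rw [← h] at ht0S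
      exact absurd ht0S.2 (not_le.2 hG0.1))
    have h_gt : ∀ t ∈ Ico (0:ℝ) t0, 1 - δ < G t := by
      intro t ht
      by_contra h
      push_neg at h
      have : t ∈ S := ⟨⟨ht.1, ht.2.le.trans ht0_mem.2⟩, h⟩
      exact absurd (csInf_le hScomp.bddBelow this) (not_le.2 ht.2)
    have hGt0 : G t0 = 1 - δ := by
      refine le_antisymm ht0S.2 ?_
      have hsub : Ico (0:ℝ) t0 ⊆ Ici (0:ℝ) := fun x hx => hx.1
      have htend : Tendsto G (nhdsWithin t0 (Ico 0 t0)) (nhds (G t0)) :=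
        ((contG t0 ht0_mem.1).mono hsub).tendsto
      have hne : (nhdsWithin t0 (Ico 0 t0)).NeBot := by
        rw [← mem_closure_iff_nhdsWithin_neBot, closure_Ico ht0_pos.ne]
        exact right_mem_Icc.2 ht0_pos.le
      refine ge_of_tendsto htend ?_
      filter_upwards [eventually_mem_nhdsWithin] with x hx
      exact (h_gt x hx).le
    -- G is monotone on [0, t0], so G t0 ≥ G 0 > 1 - δ, contradiction
    have hmono : MonotoneOn G (Icc 0 t0) := by
      apply aux_monotoneOn G f' hG (le_refl 0)
      intro t ht
      have hle1 : G t ≤ 1 := hub t ht.1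
      have hge : 1 - δ ≤ G t := by
        rcases lt_or_eq_of_le ht.2 with h | h
        · exact (h_gt t ⟨ht.1, h⟩).le
        · rw [h, hGt0]
      rw [hf'_eq]
      have h1 : 0 ≤ 1 - G t := by linarith
      have h2 : 0 ≤ φ (G t) - J * G t := hc.le.trans (hkey (G t) hge hle1)
      positivity
    have := hmono ⟨le_refl 0, ht0_pos.le⟩ ⟨ht0_pos.le, le_refl t0⟩ ht0_pos.le
    rw [hGt0] at this
    exact absurd this (not_le.2 hG0.1)
  -- derivative is nonnegative everywhere on [0,∞)
  have hf'nn : ∀ t ∈ Ici (0:ℝ), 0 ≤ f' t := by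
    intro t ht
    rw [hf'_eq]
    have h1 : 0 ≤ 1 - G t := by linarith [hub t ht]
    have h2 : 0 ≤ φ (G t) - J * G t :=
      hc.le.trans (hkey (G t) (hlb t ht).le (hub t ht))
    positivity
  -- Step 3: monotonicity on [0, ∞)
  have hmono : MonotoneOn G (Ici 0) := by
    intro x hx y hy hxy
    exact aux_monotoneOn G f' hG hx (fun t ht => hf'nn t (hx.trans ht.1))
      (left_mem_Icc.2 hxy) (right_mem_Icc.2 hxy) hxy
  refine ⟨hmono, fun t ht => ⟨hlb t ht, hub t ht⟩, ?_⟩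
  -- Step 4: convergence to 1
  set L : ℝ := sSup (G '' Ici 0) with hL_def
  have hbdd : BddAbove (G '' Ici 0) := ⟨1, fun x ⟨t, ht, hxt⟩ => hxt ▸ hub t ht⟩
  have hne : (G '' Ici 0).Nonempty := ⟨G 0, 0, self_mem_Ici, rfl⟩
  have hGL : ∀ t ∈ Ici (0:ℝ), G t ≤ L := fun t ht => le_csSup hbdd ⟨t, ht, rfl⟩
  have hL1 : L ≤ 1 := csSup_le hne (fun x ⟨t, ht, hxt⟩ => hxt ▸ hub t ht)
  have hLeq : L = 1 := by
    by_contra hLne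
    have hLlt : L < 1 := lt_of_le_of_ne hL1 hLne
    set ε : ℝ := c * (1 - L) with hε_def
    have hεpos : 0 < ε := by
      have : 0 < 1 - L := by linarith
      positivity
    -- derivative bounded below by ε, hence G grows without bound: contradiction
    have hder_lb : ∀ t ∈ Ici (0:ℝ), ε ≤ f' t := by
      intro t ht
      rw [hf'_eq, hε_def]
      have h1 : 1 - L ≤ 1 - G t := by linarith [hGL t ht]
      have h2 : c ≤ φ (G t) - J * G t := hkey (G t) (hlb t ht).le (hub t ht)
      have h3 : (0:ℝ) < 1 - L := by linarith
      nlinarith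
    have haux : ∀ T : ℝ, 0 ≤ T → G 0 + ε * T ≤ G T := by
      intro T hT
      have hh : ∀ t ∈ Ici (0:ℝ), HasDerivWithinAt (fun t => G t - ε * t)
          (f' t - ε) (Ici 0) t := by
        intro t ht
        exact (hG t ht).sub (((hasDerivAt_id t).const_mul ε).hasDerivWithinAt.congr_deriv
          (by simp))
      have := aux_monotoneOn _ _ hh (le_refl 0)
        (fun t ht => by linarith [hder_lb t ht.1])
        (left_mem_Icc.2 hT) (right_mem_Icc.2 hT) hT
      simp only [mul_zero, sub_zero] at this
      linarith
    obtain ⟨T, hT_def⟩ : ∃ T : ℝ, T = (1 - G 0) / ε + 1 := ⟨_, rfl⟩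
    have hT0 : 0 ≤ T := by
      have h1 : 0 ≤ (1 - G 0) / ε := div_nonneg (by linarith [hG0.2]) hεpos.le
      linarith
    have h1 := haux T hT0
    have h2 : ε * T = (1 - G 0) + ε := by
      rw [hT_def, mul_add, mul_one, mul_div_cancel₀ _ hεpos.ne']
    have h3 : G T ≤ 1 := hub T hT0
    linarith
  rw [← hLeq]
  rw [Metric.tendsto_atTop]
  intro εp hεp
  obtain ⟨x, ⟨t0, ht0, hxt0⟩, hx⟩ := exists_lt_of_lt_csSup hne (by linarith : L - εp < L)
  refine ⟨t0, fun t ht => ?_⟩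
  have htI : t ∈ Ici (0:ℝ) := ht0.trans ht
  have hmlb : L - εp < G t := by
    have := hmono ht0 htI ht
    rw [← hxt0] at hx
    linarith
  rw [Real.dist_eq, abs_lt]
  constructor
  · linarith
  · linarith [hGL t htI]
end

section
/- Let φ : ℝ → ℝ be Lipschitz continuous and J̄ > φ(1). Then there exists δ ∈ (0,1) such that (1−G)φ(G) − J̄ G(1−G) < 0 for all G ∈ (1−δ, 1); consequently, every solution G of the two-state grass–forest generalized Kolmogorov equation G' = (1−G)φ(G) − J̄ G(1−G) with G(0) ∈ (1−δ,1) is strictly decreasing as long as it remains in (1−δ,1). In particular, the all-grass equilibrium G = 1 is unstable when J̄ > φ(1). -/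
open Set

/-- If the forest birth rate exceeds forest mortality at full grass cover
(`J̄ > φ(1)`), then there is `δ ∈ (0,1)` so that the vector field
`(1−G)φ(G) − J̄ G(1−G)` is negative on `(1−δ, 1)`; consequently any solution of the
grass-forest generalized Kolmogorov equation starting in `(1−δ, 1)` is strictly decreasing
as long as it remains in `(1−δ, 1)` — the all-grass equilibrium is unstable. -/
theorem all_grass_unstable
    (φ : ℝ → ℝ) (K : NNReal) (hφ : LipschitzWith K φ)
    (J : ℝ) (hJ : φ 1 < J) :
    ∃ δ ∈ Ioo (0:ℝ) 1,
      (∀ g ∈ Ioo (1 - δ) 1, (1 - g) * φ g - J * g * (1 - g) < 0) ∧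
      ∀ G : ℝ → ℝ,
        (∀ t ∈ Ici (0:ℝ), HasDerivWithinAt G
          ((1 - G t) * φ (G t) - J * G t * (1 - G t)) (Ici 0) t) →
        G 0 ∈ Ioo (1 - δ) 1 →
        ∀ t₁ t₂ : ℝ, 0 ≤ t₁ → t₁ < t₂ →
          (∀ u ∈ Icc t₁ t₂, G u ∈ Ioo (1 - δ) 1) → G t₂ < G t₁ := by
  set ε := J - φ 1 with hε
  have hεpos : 0 < ε := by simp [hε]; linarith
  set C : ℝ := (K : ℝ) + |J| + 1 with hC
  have hCpos : 0 < C := by positivity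
  set δ : ℝ := min (ε / (2 * C)) (1 / 2) with hδ
  have hδpos : 0 < δ := lt_min (by positivity) (by norm_num)
  have hδlt1 : δ < 1 := lt_of_le_of_lt (min_le_right _ _) (by norm_num)
  have hneg : ∀ g ∈ Ioo (1 - δ) 1, (1 - g) * φ g - J * g * (1 - g) < 0 := by
    intro g hg
    obtain ⟨hg1, hg2⟩ := hg
    have h1g : 0 < 1 - g := by linarith
    have h1g' : 1 - g < δ := by linarith
    have hdist : |φ g - φ 1| ≤ (K : ℝ) * (1 - g) := by
      have := hφ.dist_le_mul g 1
      rw [Real.dist_eq, Real.dist_eq] at this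
      calc |φ g - φ 1| ≤ (K : ℝ) * |g - 1| := this
        _ = (K : ℝ) * (1 - g) := by rw [abs_of_nonpos (by linarith)]; ring_nf
    have hkey : φ g - J * g < 0 := by
      have hδC : δ * C ≤ ε / 2 := by
        have : δ ≤ ε / (2 * C) := min_le_left _ _
        calc δ * C ≤ (ε / (2 * C)) * C := by nlinarith
          _ = ε / 2 := by field_simp
      have h1 : φ g - φ 1 ≤ (K : ℝ) * (1 - g) := (abs_le.mp hdist).2
      have h2 : J * (1 - g) ≤ |J| * (1 - g) := by
        nlinarith [le_abs_self J]
      have hKC : ((K : ℝ) + |J|) * (1 - g) ≤ ((K : ℝ) + |J|) * δ := by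
        have : (0:ℝ) ≤ (K : ℝ) + |J| := by positivity
        nlinarith
      have : ((K : ℝ) + |J|) * δ ≤ δ * C := by
        have : (0:ℝ) < δ := hδpos
        nlinarith
      -- φ g - J g = (φ g - φ 1) + (φ 1 - J) + J (1 - g)
      nlinarith
    have : (1 - g) * φ g - J * g * (1 - g) = (1 - g) * (φ g - J * g) := by ring
    rw [this]
    exact mul_neg_of_pos_of_neg h1g hkey
  refine ⟨δ, ⟨hδpos, hδlt1⟩, hneg, ?_⟩
  intro G hG hG0 t₁ t₂ ht₁ ht₁₂ hIn
  have hsub : Icc t₁ t₂ ⊆ Ici (0:ℝ) := fun u hu => le_trans ht₁ hu.1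
  have hcont : ContinuousOn G (Icc t₁ t₂) := fun u hu =>
    ((hG u (hsub hu)).continuousWithinAt).mono hsub
  have hanti : StrictAntiOn G (Icc t₁ t₂) := by
    apply strictAntiOn_of_deriv_neg (convex_Icc t₁ t₂) hcont
    intro x hx
    rw [interior_Icc] at hx
    have hx0 : 0 < x := lt_of_le_of_lt ht₁ hx.1
    have hmem : Ici (0:ℝ) ∈ nhds x := Ici_mem_nhds hx0
    have hd : HasDerivAt G ((1 - G x) * φ (G x) - J * G x * (1 - G x)) x :=
      (hG x (le_of_lt hx0)).hasDerivAt hmem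
    rw [hd.deriv]
    exact hneg (G x) (hIn x ⟨le_of_lt hx.1, le_of_lt hx.2⟩)
  exact hanti ⟨le_refl t₁, le_of_lt ht₁₂⟩ ⟨le_of_lt ht₁₂, le_refl t₂⟩ ht₁₂
end

section
/- Let φ : [0,1] → ℝ be continuous with φ(0) > 0, and let J̄ > φ(1). Then there exists G* ∈ (0,1) with φ(G*) = J̄ G*; consequently the constant function G(t) ≡ G* is an equilibrium of the two-state grass–forest generalized Kolmogorov equation G' = (1−G)φ(G) − J̄ G(1−G) distinct from the all-grass state (the grass-dominated equilibrium emerging at the transcritical bifurcation). -/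
open Set

/-- If `φ` is continuous on `[0,1]` with `φ(0) > 0` and `J̄ > φ(1)`, then
there is `G* ∈ (0,1)` with `φ(G*) = J̄ G*`; the constant function `G ≡ G*` is then an
equilibrium of the grass-forest generalized Kolmogorov equation distinct from the all-grass
state (the grass-dominated equilibrium emerging at the transcritical bifurcation). -/
theorem grass_dominated_equilibrium_exists
    (φ : ℝ → ℝ) (hφc : ContinuousOn φ (Icc (0:ℝ) 1))
    (hφ0 : 0 < φ 0) (J : ℝ) (hJ : φ 1 < J) :
    ∃ Gstar ∈ Ioo (0:ℝ) 1, φ Gstar = J * Gstar ∧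
      ∀ t : ℝ, HasDerivAt (fun _ : ℝ => Gstar)
        ((1 - Gstar) * φ Gstar - J * Gstar * (1 - Gstar)) t := by
  set f : ℝ → ℝ := fun x => φ x - J * x with hf
  have hfc : ContinuousOn f (Icc 0 1) :=
    hφc.sub (continuousOn_const.mul continuousOn_id)
  have h01 : (0:ℝ) ≤ 1 := by norm_num
  have hsub := intermediate_value_Icc' h01 hfc
  have h0 : (0:ℝ) ∈ Icc (f 1) (f 0) := by
    constructor
    · simp only [hf]; linarith
    · simp only [hf]; linarith
  obtain ⟨c, hc, hfc0⟩ := hsub h0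
  have hcne0 : c ≠ 0 := by
    intro h; rw [h] at hfc0; simp only [hf] at hfc0; simp at hfc0; linarith
  have hcne1 : c ≠ 1 := by
    intro h; rw [h] at hfc0; simp only [hf] at hfc0; linarith
  refine ⟨c, ⟨lt_of_le_of_ne hc.1 (Ne.symm hcne0), lt_of_le_of_ne hc.2 hcne1⟩, ?_, ?_⟩
  · simp only [hf] at hfc0; linarith
  · intro t
    have : (1 - c) * φ c - J * c * (1 - c) = 0 := by
      have : φ c = J * c := by simp only [hf] at hfc0; linarith
      rw [this]; ring
    rw [this]
    exact hasDerivAt_const t c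
end

section
/- Let φ : ℝ → ℝ be Lipschitz continuous with φ ≥ 0, let J̄ ≥ 0, and suppose φ(G) > J̄ G for all G ∈ [0,1). Then every solution G : [0,∞) → ℝ of the two-state grass–forest generalized Kolmogorov equation G' = (1−G)φ(G) − J̄ G(1−G) with G(0) ∈ [0,1] is nondecreasing and satisfies G(t) → 1 as t → ∞; i.e., for forest birth rate small enough the all-grass state is the globally attracting equilibrium on [0,1]. -/
open Set Filter

/-- If `φ` is Lipschitz, nonnegative, `J̄ ≥ 0`, and `φ(G) > J̄ G` on
`[0,1)`, then every solution of the grass-forest generalized Kolmogorov equation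
`G' = (1−G)φ(G) − J̄ G(1−G)` starting in `[0,1]` is nondecreasing and converges to the
all-grass state `G = 1`, which is thus globally attracting on `[0,1]`. -/
theorem all_grass_globally_attracting
    (φ : ℝ → ℝ) (K : NNReal) (hφ : LipschitzWith K φ) (hφnn : ∀ x : ℝ, 0 ≤ φ x)
    (J : ℝ) (hJ : 0 ≤ J)
    (hdom : ∀ g ∈ Ico (0:ℝ) 1, J * g < φ g)
    (G : ℝ → ℝ)
    (hG : ∀ t ∈ Ici (0:ℝ), HasDerivWithinAt G
      ((1 - G t) * φ (G t) - J * G t * (1 - G t)) (Ici 0) t)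
    (h0 : G 0 ∈ Icc (0:ℝ) 1) :
    MonotoneOn G (Ici 0) ∧ Tendsto G atTop (nhds 1) := by
  have hcont : ContinuousOn G (Ici 0) := fun t ht => (hG t ht).continuousWithinAt
  have hφc : Continuous φ := hφ.continuous
  -- Upper bound: G t ≤ 1 for all t ≥ 0, via Grönwall from the first time G hits 1.
  have hle1 : ∀ t ∈ Ici (0:ℝ), G t ≤ 1 := by
    by_contra hcon
    push_neg at hcon
    obtain ⟨b, hb0, hb1⟩ := hcon
    have hb0' : (0:ℝ) ≤ b := hb0
    set s : Set ℝ := Icc 0 b ∩ {t | G t ≤ 1} with hs_def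
    have hs_closed : IsClosed s :=
      (hcont.mono (Icc_subset_Ici_self)).preimage_isClosed_of_isClosed isClosed_Icc
        isClosed_Iic
    have hs_ne : s.Nonempty := ⟨0, ⟨le_refl 0, hb0'⟩, h0.2⟩
    have hs_bdd : BddAbove s := ⟨b, fun x hx => hx.1.2⟩
    set a := sSup s with ha_def
    have ha_mem : a ∈ s := hs_closed.csSup_mem hs_ne hs_bdd
    have ha0 : (0:ℝ) ≤ a := ha_mem.1.1
    have hab : a ≤ b := ha_mem.1.2
    have hcont_ab : ContinuousOn G (Icc a b) :=
      hcont.mono (Icc_subset_Ici_self.trans (Ici_subset_Ici.2 ha0))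
    -- G a = 1
    have hGa : G a = 1 := by
      have hmem2 : G a ≤ 1 := ha_mem.2
      rcases eq_or_lt_of_le hmem2 with h | h
      · exact h
      · obtain ⟨c, hc_mem, hc_val⟩ := intermediate_value_Icc hab hcont_ab
          (⟨le_of_lt h, le_of_lt hb1⟩ : (1:ℝ) ∈ Icc (G a) (G b))
        have hc_in_s : c ∈ s := ⟨⟨ha0.trans hc_mem.1, hc_mem.2⟩, le_of_eq hc_val⟩
        have : c ≤ a := le_csSup hs_bdd hc_in_s
        have hca : c = a := le_antisymm this hc_mem.1
        rw [← hca, hc_val] at h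
        exact absurd h (lt_irrefl 1)
    -- bound |G| on [a,b]
    obtain ⟨M, hM⟩ := isCompact_Icc.exists_bound_of_continuousOn hcont_ab
    set C : ℝ := |φ 0| + (K : ℝ) * M + J * M with hC_def
    have hM0 : (0:ℝ) ≤ M := le_trans (norm_nonneg _) (hM a ⟨le_refl a, hab⟩)
    -- Grönwall for v = G - 1
    have key := norm_le_gronwallBound_of_norm_deriv_right_le
      (f := fun t => G t - 1)
      (f' := fun t => (1 - G t) * φ (G t) - J * G t * (1 - G t))
      (δ := 0) (K := C) (ε := 0) (a := a) (b := b)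
      (hcont_ab.sub continuousOn_const)
      (fun x hx => ((hG x (ha0.trans hx.1)).mono
        (Ici_subset_Ici.2 (ha0.trans hx.1))).sub_const 1)
      (by simp [hGa])
      (fun x hx => by
        have hxab : x ∈ Icc a b := ⟨hx.1, le_of_lt hx.2⟩
        have hGx : ‖G x‖ ≤ M := hM x hxab
        have hφx : |φ (G x)| ≤ |φ 0| + (K : ℝ) * M := by
          have := hφ.dist_le_mul (G x) 0
          rw [Real.dist_eq, Real.dist_eq, sub_zero] at this
          have h1 : |φ (G x)| ≤ |φ (G x) - φ 0| + |φ 0| := by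
            calc |φ (G x)| = |(φ (G x) - φ 0) + φ 0| := by ring_nf
            _ ≤ |φ (G x) - φ 0| + |φ 0| := abs_add_le _ _
          have h2 : (K : ℝ) * |G x| ≤ (K : ℝ) * M := by
            apply mul_le_mul_of_nonneg_left _ K.2
            simpa [Real.norm_eq_abs] using hGx
          linarith
        have hJx : |J * G x| ≤ J * M := by
          rw [abs_mul, abs_of_nonneg hJ]
          exact mul_le_mul_of_nonneg_left (by simpa [Real.norm_eq_abs] using hGx) hJ
        have heq : (1 - G x) * φ (G x) - J * G x * (1 - G x)
            = -((G x - 1) * (φ (G x) - J * G x)) := by ring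
        show ‖(1 - G x) * φ (G x) - J * G x * (1 - G x)‖ ≤ C * ‖G x - 1‖ + 0
        rw [heq, norm_neg, norm_mul]
        have hfactor : ‖φ (G x) - J * G x‖ ≤ C := by
          rw [Real.norm_eq_abs]
          calc |φ (G x) - J * G x| ≤ |φ (G x)| + |J * G x| := abs_sub _ _
          _ ≤ (|φ 0| + (K : ℝ) * M) + J * M := add_le_add hφx hJx
          _ = C := by ring
        calc ‖G x - 1‖ * ‖φ (G x) - J * G x‖ ≤ ‖G x - 1‖ * C :=
              mul_le_mul_of_nonneg_left hfactor (norm_nonneg _)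
        _ = C * ‖G x - 1‖ + 0 := by ring)
    have hb_in : b ∈ Icc a b := ⟨hab, le_refl b⟩
    have := key b hb_in
    rw [gronwallBound_ε0_δ0] at this
    have : G b - 1 = 0 := by
      have h := norm_nonneg (G b - 1)
      have h2 : ‖G b - 1‖ = 0 := le_antisymm this h
      simpa using h2
    linarith
  -- Lower bound: G t ≥ 0 for all t ≥ 0.
  have hge0 : ∀ t ∈ Ici (0:ℝ), 0 ≤ G t := by
    by_contra hcon
    push_neg at hcon
    obtain ⟨b, hb0, hb1⟩ := hcon
    have hb0' : (0:ℝ) ≤ b := hb0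
    set s : Set ℝ := Icc 0 b ∩ {t | 0 ≤ G t} with hs_def
    have hs_closed : IsClosed s :=
      (hcont.mono (Icc_subset_Ici_self)).preimage_isClosed_of_isClosed isClosed_Icc
        isClosed_Ici
    have hs_ne : s.Nonempty := ⟨0, ⟨le_refl 0, hb0'⟩, h0.1⟩
    have hs_bdd : BddAbove s := ⟨b, fun x hx => hx.1.2⟩
    set a := sSup s with ha_def
    have ha_mem : a ∈ s := hs_closed.csSup_mem hs_ne hs_bdd
    have ha0 : (0:ℝ) ≤ a := ha_mem.1.1
    have hab : a ≤ b := ha_mem.1.2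
    have hcont_ab : ContinuousOn G (Icc a b) :=
      hcont.mono (Icc_subset_Ici_self.trans (Ici_subset_Ici.2 ha0))
    -- G a = 0
    have hGa : G a = 0 := by
      have hmem2 : 0 ≤ G a := ha_mem.2
      rcases eq_or_lt_of_le hmem2 with h | h
      · exact h.symm
      · obtain ⟨c, hc_mem, hc_val⟩ := intermediate_value_Icc' hab hcont_ab
          (⟨le_of_lt hb1, le_of_lt h⟩ : (0:ℝ) ∈ Icc (G b) (G a))
        have hc_in_s : c ∈ s := ⟨⟨ha0.trans hc_mem.1, hc_mem.2⟩, le_of_eq hc_val.symm⟩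
        have : c ≤ a := le_csSup hs_bdd hc_in_s
        have hca : c = a := le_antisymm this hc_mem.1
        rw [← hca, hc_val] at h
        exact absurd h (lt_irrefl 0)
    -- every point of (a, b] has G < 0; in particular G ≤ 0 on [a,b]
    have hneg : ∀ t ∈ Icc a b, G t ≤ 0 := by
      intro t ht
      rcases eq_or_lt_of_le ht.1 with h | h
      · rw [← h, hGa]
      · by_contra hGt
        push_neg at hGt
        have : t ∈ s := ⟨⟨ha0.trans ht.1, ht.2⟩, le_of_lt hGt⟩
        have := le_csSup hs_bdd this
        linarith
    -- G is monotone on [a,b] since G ≤ 0 there makes the derivative nonnegative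
    have hmono_ab : MonotoneOn G (Icc a b) := by
      apply monotoneOn_of_hasDerivWithinAt_nonneg (convex_Icc a b) hcont_ab
        (f' := fun t => (1 - G t) * φ (G t) - J * G t * (1 - G t))
      · intro t ht
        rw [interior_Icc] at ht
        exact (hG t (le_of_lt (lt_of_le_of_lt ha0 ht.1))).mono
          (by rw [interior_Icc]; exact fun x hx => le_of_lt (lt_of_le_of_lt ha0 hx.1))
      · intro t ht
        rw [interior_Icc] at ht
        have hGt0 : G t ≤ 0 := hneg t ⟨le_of_lt ht.1, le_of_lt ht.2⟩
        have h1 : (0:ℝ) ≤ 1 - G t := by linarith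
        have h2 : (0:ℝ) ≤ φ (G t) - J * G t := by
          have := mul_nonpos_of_nonneg_of_nonpos hJ hGt0
          have := hφnn (G t)
          linarith
        have := mul_nonneg h1 h2
        nlinarith
    have := hmono_ab ⟨le_refl a, hab⟩ ⟨hab, le_refl b⟩ hab
    have hGa0 : 0 ≤ G a := ha_mem.2
    linarith
  -- Monotonicity on [0, ∞)
  have hderiv_nonneg : ∀ t ∈ Ici (0:ℝ),
      0 ≤ (1 - G t) * φ (G t) - J * G t * (1 - G t) := by
    intro t ht
    have h1 : G t ≤ 1 := hle1 t ht
    have h0t : 0 ≤ G t := hge0 t ht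
    rcases eq_or_lt_of_le h1 with h | h
    · have : (1 - G t) * φ (G t) - J * G t * (1 - G t) = 0 := by rw [h]; ring
      linarith
    · have := hdom (G t) ⟨h0t, h⟩
      nlinarith
  have hmono : MonotoneOn G (Ici 0) := by
    apply monotoneOn_of_hasDerivWithinAt_nonneg (convex_Ici 0) hcont
      (f' := fun t => (1 - G t) * φ (G t) - J * G t * (1 - G t))
    · intro t ht
      rw [interior_Ici] at ht
      exact (hG t (Ioi_subset_Ici_self ht)).mono (by rw [interior_Ici]; exact Ioi_subset_Ici_self)
    · intro t ht
      rw [interior_Ici] at ht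
      exact hderiv_nonneg t (Ioi_subset_Ici_self ht)
  refine ⟨hmono, ?_⟩
  -- Key: for every L ∈ [0,1) there is t0 ≥ 0 with L < G t0.
  have hkey : ∀ L ∈ Ico (0:ℝ) 1, ∃ t0, 0 ≤ t0 ∧ L < G t0 := by
    intro L hL
    by_contra hcon
    push_neg at hcon
    -- G t ∈ [0, L] for all t ≥ 0; the RHS has a positive min c on [0,L]
    obtain ⟨g0, hg0_mem, hg0_min⟩ := isCompact_Icc.exists_isMinOn
      (nonempty_Icc.2 hL.1)
      (Continuous.continuousOn (by continuity :
        Continuous (fun g : ℝ => (1 - g) * φ g - J * g * (1 - g))))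
    set c : ℝ := (1 - g0) * φ g0 - J * g0 * (1 - g0) with hc_def
    have hg0_lt1 : g0 < 1 := lt_of_le_of_lt hg0_mem.2 hL.2
    have hc_pos : 0 < c := by
      have := hdom g0 ⟨hg0_mem.1, hg0_lt1⟩
      nlinarith
    -- H t = G t - c t is monotone on [0,∞)
    have hHmono : MonotoneOn (fun t => G t - c * t) (Ici 0) := by
      apply monotoneOn_of_hasDerivWithinAt_nonneg (convex_Ici 0)
        (hcont.sub (Continuous.continuousOn (by continuity)))
        (f' := fun t => ((1 - G t) * φ (G t) - J * G t * (1 - G t)) - c)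
      · intro t ht
        rw [interior_Ici] at ht
        exact HasDerivWithinAt.sub
          ((hG t (Ioi_subset_Ici_self ht)).mono (by rw [interior_Ici]; exact Ioi_subset_Ici_self))
          (((hasDerivAt_id t).const_mul c).hasDerivWithinAt.congr_deriv (by ring))
      · intro t ht
        rw [interior_Ici] at ht
        have htI : t ∈ Ici (0:ℝ) := Ioi_subset_Ici_self ht
        have hGt_mem : G t ∈ Icc 0 L := ⟨hge0 t htI, hcon t (le_of_lt ht)⟩
        have := hg0_min hGt_mem
        simp only [Set.mem_setOf_eq] at this
        linarith
    -- evaluate at t = 2/c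
    have h2c : (0:ℝ) ≤ 2 / c := by positivity
    have := hHmono (self_mem_Ici) (h2c : (2:ℝ)/c ∈ Ici 0) h2c
    simp only [mul_zero, sub_zero] at this
    have hcc : c * (2 / c) = 2 := by field_simp
    have hG2 : G (2 / c) ≤ 1 := hle1 _ h2c
    have hG0 : 0 ≤ G 0 := h0.1
    rw [hcc] at this
    linarith
  -- Conclude the limit
  rw [tendsto_order]
  constructor
  · intro x hx
    set L : ℝ := max x 0 with hL_def
    have hL_mem : L ∈ Ico (0:ℝ) 1 := ⟨le_max_right x 0, max_lt hx one_pos⟩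
    obtain ⟨t0, ht0, hGt0⟩ := hkey L hL_mem
    rw [eventually_atTop]
    exact ⟨t0, fun t ht => lt_of_le_of_lt (le_max_left x 0)
      (lt_of_lt_of_le hGt0 (hmono ht0 (ht0.trans ht) ht))⟩
  · intro x hx
    rw [eventually_atTop]
    exact ⟨0, fun t ht => lt_of_le_of_lt (hle1 t ht) hx⟩
end

section
/- Let Γ be a measurable space with probability measure q, let J, W : Γ × Γ → ℝ be bounded measurable kernels, and let φ : ℝ → ℝ be bounded and Lipschitz continuous. Suppose P, Q : [0,T] × Γ → [0,1] are jointly measurable, continuous in t for each r, differentiable in t, and both satisfy the forest-grass integro-differential equation ∂_t P_F(t,r) = (1 − P_F(t,r)) ∫_Γ J(r',r) P_F(t,r') dq(r') − P_F(t,r) φ(∫_Γ W(r',r) (1 − P_F(t,r')) dq(r')), with P(0,·) = Q(0,·) for q-almost every r. Then for every t ∈ [0,T], P(t,·) = Q(t,·) for q-almost every r. -/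
open Set MeasureTheory Filter

/-- Uniqueness for the forest-grass integro-differential equation (the
generalized Kolmogorov equation of the mesoscale mean-field limit): any two `[0,1]`-valued,
jointly measurable, time-continuous, time-differentiable solutions that agree `q`-a.e. at
time `0` agree `q`-a.e. at every time `t ∈ [0,T]`. -/
theorem forest_grass_ide_uniqueness
    {Γ : Type*} [MeasurableSpace Γ]
    (q : Measure Γ) [IsProbabilityMeasure q]
    (J W : Γ → Γ → ℝ)
    (hJmeas : Measurable fun p : Γ × Γ => J p.1 p.2)
    (hWmeas : Measurable fun p : Γ × Γ => W p.1 p.2)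
    (CJ CW : ℝ) (hJbdd : ∀ r r' : Γ, |J r r'| ≤ CJ) (hWbdd : ∀ r r' : Γ, |W r r'| ≤ CW)
    (φ : ℝ → ℝ) (L : NNReal) (hφ : LipschitzWith L φ)
    (Cφ : ℝ) (hφbdd : ∀ x : ℝ, |φ x| ≤ Cφ)
    (T : ℝ) (hT : 0 < T)
    (P Q : ℝ → Γ → ℝ)
    (hPmeas : Measurable fun p : ℝ × Γ => P p.1 p.2)
    (hQmeas : Measurable fun p : ℝ × Γ => Q p.1 p.2)
    (hPrange : ∀ t ∈ Icc (0:ℝ) T, ∀ r : Γ, P t r ∈ Icc (0:ℝ) 1)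
    (hQrange : ∀ t ∈ Icc (0:ℝ) T, ∀ r : Γ, Q t r ∈ Icc (0:ℝ) 1)
    (hPcont : ∀ r : Γ, ContinuousOn (fun t => P t r) (Icc (0:ℝ) T))
    (hQcont : ∀ r : Γ, ContinuousOn (fun t => Q t r) (Icc (0:ℝ) T))
    (hPeq : ∀ r : Γ, ∀ t ∈ Icc (0:ℝ) T,
      HasDerivWithinAt (fun s => P s r)
        ((1 - P t r) * (∫ r', J r' r * P t r' ∂q)
          - P t r * φ (∫ r', W r' r * (1 - P t r') ∂q)) (Icc (0:ℝ) T) t)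
    (hQeq : ∀ r : Γ, ∀ t ∈ Icc (0:ℝ) T,
      HasDerivWithinAt (fun s => Q s r)
        ((1 - Q t r) * (∫ r', J r' r * Q t r' ∂q)
          - Q t r * φ (∫ r', W r' r * (1 - Q t r') ∂q)) (Icc (0:ℝ) T) t)
    (hinit : ∀ᵐ r ∂q, P 0 r = Q 0 r) :
    ∀ t ∈ Icc (0:ℝ) T, ∀ᵐ r ∂q, P t r = Q t r := by
  have hT0 : (0:ℝ) ≤ T := hT.le
  have hne : Nonempty Γ := by
    by_contra h
    rw [not_nonempty_iff] at h
    have h1 : q Set.univ = 1 := measure_univ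
    rw [Set.univ_eq_empty_iff.2 h, measure_empty] at h1
    exact zero_ne_one h1
  obtain ⟨r0⟩ := hne
  have hCJ : 0 ≤ CJ := (abs_nonneg _).trans (hJbdd r0 r0)
  have hCW : 0 ≤ CW := (abs_nonneg _).trans (hWbdd r0 r0)
  have hCφ : 0 ≤ Cφ := (abs_nonneg _).trans (hφbdd 0)
  -- the clamp onto [0, T]
  set π : ℝ → ℝ := fun t => min (max t 0) T with hπdef
  have hπcont : Continuous π := (continuous_id.max continuous_const).min continuous_const
  have hπmem : ∀ t, π t ∈ Icc (0:ℝ) T := fun t =>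
    ⟨le_min (le_max_right _ _) hT0, min_le_right _ _⟩
  have hπid : ∀ t ∈ Icc (0:ℝ) T, π t = t := by
    intro t ht
    simp only [hπdef, max_eq_left ht.1, min_eq_left ht.2]
  -- the difference function (clamped in time)
  set f : ℝ → Γ → ℝ := fun t r => P (π t) r - Q (π t) r with hfdef
  have hfm : Measurable fun p : ℝ × Γ => f p.1 p.2 := by
    have hc : Measurable fun p : ℝ × Γ => ((π p.1, p.2) : ℝ × Γ) :=
      (hπcont.measurable.comp measurable_fst).prodMk measurable_snd
    exact (hPmeas.comp hc).sub (hQmeas.comp hc)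
  have hfmr : ∀ t, Measurable fun r => f t r := fun t => hfm.comp measurable_prodMk_left
  have hfbdd : ∀ t r, |f t r| ≤ 1 := by
    intro t r
    have h1 := hPrange _ (hπmem t) r
    have h2 := hQrange _ (hπmem t) r
    rw [abs_le]
    exact ⟨by simp only [hfdef]; linarith [h1.1, h2.2], by simp only [hfdef]; linarith [h1.2, h2.1]⟩
  have hfcontr : ∀ r, Continuous fun t => f t r := by
    intro r
    have hPc : Continuous fun t => P (π t) r := by
      rw [← continuousOn_univ]
      exact (hPcont r).comp hπcont.continuousOn (fun t _ => hπmem t)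
    have hQc : Continuous fun t => Q (π t) r := by
      rw [← continuousOn_univ]
      exact (hQcont r).comp hπcont.continuousOn (fun t _ => hπmem t)
    exact hPc.sub hQc
  -- integrability helper
  have intbdd : ∀ {h : Γ → ℝ}, Measurable h → ∀ {C : ℝ}, (∀ r, |h r| ≤ C) → Integrable h q := by
    intro h hm C hb
    exact (integrable_const C).mono' hm.aestronglyMeasurable
      (Eventually.of_forall fun r => by simpa [Real.norm_eq_abs] using hb r)
  have hfint : ∀ t, Integrable (fun r => |f t r|) q := fun t =>
    intbdd (hfmr t).abs (fun r => by rw [abs_abs]; exact hfbdd t r)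
  -- the L¹ distance
  set D : ℝ → ℝ := fun t => ∫ r, |f t r| ∂q with hDdef
  have hD0 : ∀ t, 0 ≤ D t := fun t => integral_nonneg fun r => abs_nonneg _
  have hD1 : ∀ t, D t ≤ 1 := by
    intro t
    calc D t ≤ ∫ _r, (1:ℝ) ∂q := integral_mono (hfint t) (integrable_const 1) fun r => hfbdd t r
    _ = 1 := by simp
  have hDcont : Continuous D := by
    apply continuous_of_dominated (fun t => ((hfmr t).abs).aestronglyMeasurable)
      (fun t => Eventually.of_forall fun r => by
        simpa [Real.norm_eq_abs, abs_abs] using hfbdd t r)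
      (integrable_const 1)
    exact Eventually.of_forall fun r => (hfcontr r).abs
  -- kernel integral bounds
  have kerJdiff : ∀ s ∈ Icc (0:ℝ) T, ∀ r : Γ,
      |(∫ r', J r' r * P s r' ∂q) - ∫ r', J r' r * Q s r' ∂q| ≤ CJ * D s := by
    intro s hs r
    have hPm : Measurable fun r' => P s r' := hPmeas.comp measurable_prodMk_left
    have hQm : Measurable fun r' => Q s r' := hQmeas.comp measurable_prodMk_left
    have hJm : Measurable fun r' => J r' r := hJmeas.comp (measurable_id.prodMk measurable_const)
    have hPa : ∀ r', |P s r'| ≤ 1 := fun r' =>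
      abs_le.2 ⟨by linarith [(hPrange s hs r').1], (hPrange s hs r').2⟩
    have hQa : ∀ r', |Q s r'| ≤ 1 := fun r' =>
      abs_le.2 ⟨by linarith [(hQrange s hs r').1], (hQrange s hs r').2⟩
    have hintP : Integrable (fun r' => J r' r * P s r') q :=
      intbdd (hJm.mul hPm) (C := CJ) fun r' => by
        rw [abs_mul]
        calc |J r' r| * |P s r'| ≤ CJ * 1 :=
          mul_le_mul (hJbdd r' r) (hPa r') (abs_nonneg _) hCJ
        _ = CJ := mul_one CJ
    have hintQ : Integrable (fun r' => J r' r * Q s r') q :=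
      intbdd (hJm.mul hQm) (C := CJ) fun r' => by
        rw [abs_mul]
        calc |J r' r| * |Q s r'| ≤ CJ * 1 :=
          mul_le_mul (hJbdd r' r) (hQa r') (abs_nonneg _) hCJ
        _ = CJ := mul_one CJ
    rw [← integral_sub hintP hintQ, ← Real.norm_eq_abs]
    calc ‖∫ r', (J r' r * P s r' - J r' r * Q s r') ∂q‖
        ≤ ∫ r', CJ * |f s r'| ∂q := by
          refine norm_integral_le_of_norm_le ((hfint s).const_mul CJ)
            (Eventually.of_forall fun r' => ?_)
          have : f s r' = P s r' - Q s r' := by simp only [hfdef, hπid s hs]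
          rw [Real.norm_eq_abs, ← mul_sub, abs_mul, this]
          exact mul_le_mul_of_nonneg_right (hJbdd r' r) (abs_nonneg _)
    _ = CJ * D s := by rw [integral_const_mul]
  have kerWdiff : ∀ s ∈ Icc (0:ℝ) T, ∀ r : Γ,
      |(∫ r', W r' r * (1 - P s r') ∂q) - ∫ r', W r' r * (1 - Q s r') ∂q| ≤ CW * D s := by
    intro s hs r
    have hPm : Measurable fun r' => P s r' := hPmeas.comp measurable_prodMk_left
    have hQm : Measurable fun r' => Q s r' := hQmeas.comp measurable_prodMk_left
    have hWm : Measurable fun r' => W r' r := hWmeas.comp (measurable_id.prodMk measurable_const)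
    have hPa : ∀ r', |1 - P s r'| ≤ 1 := fun r' =>
      abs_le.2 ⟨by linarith [(hPrange s hs r').2], by linarith [(hPrange s hs r').1]⟩
    have hQa : ∀ r', |1 - Q s r'| ≤ 1 := fun r' =>
      abs_le.2 ⟨by linarith [(hQrange s hs r').2], by linarith [(hQrange s hs r').1]⟩
    have hintP : Integrable (fun r' => W r' r * (1 - P s r')) q :=
      intbdd (hWm.mul (measurable_const.sub hPm)) (C := CW) fun r' => by
        rw [abs_mul]
        calc |W r' r| * |1 - P s r'| ≤ CW * 1 :=
          mul_le_mul (hWbdd r' r) (hPa r') (abs_nonneg _) hCW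
        _ = CW := mul_one CW
    have hintQ : Integrable (fun r' => W r' r * (1 - Q s r')) q :=
      intbdd (hWm.mul (measurable_const.sub hQm)) (C := CW) fun r' => by
        rw [abs_mul]
        calc |W r' r| * |1 - Q s r'| ≤ CW * 1 :=
          mul_le_mul (hWbdd r' r) (hQa r') (abs_nonneg _) hCW
        _ = CW := mul_one CW
    rw [← integral_sub hintP hintQ, ← Real.norm_eq_abs]
    calc ‖∫ r', (W r' r * (1 - P s r') - W r' r * (1 - Q s r')) ∂q‖
        ≤ ∫ r', CW * |f s r'| ∂q := by
          refine norm_integral_le_of_norm_le ((hfint s).const_mul CW)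
            (Eventually.of_forall fun r' => ?_)
          have hfe : f s r' = P s r' - Q s r' := by simp only [hfdef, hπid s hs]
          rw [Real.norm_eq_abs, ← mul_sub, abs_mul]
          have : (1 - P s r') - (1 - Q s r') = -(P s r' - Q s r') := by ring
          rw [this, abs_neg, ← hfe]
          exact mul_le_mul_of_nonneg_right (hWbdd r' r) (abs_nonneg _)
    _ = CW * D s := by rw [integral_const_mul]
  have kerJQ : ∀ s ∈ Icc (0:ℝ) T, ∀ r : Γ, |∫ r', J r' r * Q s r' ∂q| ≤ CJ := by
    intro s hs r
    have hQa : ∀ r', |Q s r'| ≤ 1 := fun r' =>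
      abs_le.2 ⟨by linarith [(hQrange s hs r').1], (hQrange s hs r').2⟩
    rw [← Real.norm_eq_abs]
    calc ‖∫ r', J r' r * Q s r' ∂q‖ ≤ ∫ _r', CJ ∂q := by
          refine norm_integral_le_of_norm_le (integrable_const CJ)
            (Eventually.of_forall fun r' => ?_)
          rw [Real.norm_eq_abs, abs_mul]
          calc |J r' r| * |Q s r'| ≤ CJ * 1 :=
            mul_le_mul (hJbdd r' r) (hQa r') (abs_nonneg _) hCJ
          _ = CJ := mul_one CJ
    _ = CJ := by simp
  -- the constants
  set A : ℝ := CJ + Cφ with hAdef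
  set B : ℝ := CJ + (L : ℝ) * CW with hBdef
  have hA0 : 0 ≤ A := by positivity
  have hB0 : 0 ≤ B := by positivity
  -- the derivative of the difference
  set d : Γ → ℝ → ℝ := fun r s =>
    ((1 - P s r) * (∫ r', J r' r * P s r' ∂q)
      - P s r * φ (∫ r', W r' r * (1 - P s r') ∂q))
    - ((1 - Q s r) * (∫ r', J r' r * Q s r' ∂q)
      - Q s r * φ (∫ r', W r' r * (1 - Q s r') ∂q)) with hddef
  have hdbound : ∀ r : Γ, ∀ s ∈ Icc (0:ℝ) T, |d r s| ≤ A * |f s r| + B * D s := by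
    intro r s hs
    set p := P s r
    set q' := Q s r
    set IP := ∫ r', J r' r * P s r' ∂q
    set IQ := ∫ r', J r' r * Q s r' ∂q
    set WP := ∫ r', W r' r * (1 - P s r') ∂q
    set WQ := ∫ r', W r' r * (1 - Q s r') ∂q
    have hfe : |f s r| = |p - q'| := by simp only [hfdef, hπid s hs]; rfl
    have hp := hPrange s hs r
    have hq := hQrange s hs r
    have h1 : |IQ| ≤ CJ := kerJQ s hs r
    have h2 : |IP - IQ| ≤ CJ * D s := kerJdiff s hs r
    have h3 : |WP - WQ| ≤ CW * D s := kerWdiff s hs r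
    have h4 : |φ WP| ≤ Cφ := hφbdd WP
    have h5 : |φ WP - φ WQ| ≤ (L : ℝ) * |WP - WQ| := by
      have := hφ.dist_le_mul WP WQ
      rwa [Real.dist_eq, Real.dist_eq] at this
    have hrepr : d r s = (1 - p) * (IP - IQ) + (q' - p) * IQ
        - ((p - q') * φ WP + q' * (φ WP - φ WQ)) := by
      simp only [hddef]; ring
    have t1 : |(1 - p) * (IP - IQ)| ≤ 1 * (CJ * D s) := by
      rw [abs_mul]
      exact mul_le_mul (abs_le.2 ⟨by linarith [hp.2], by linarith [hp.1]⟩) h2 (abs_nonneg _)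
        zero_le_one
    have t2 : |(q' - p) * IQ| ≤ |p - q'| * CJ := by
      rw [abs_mul, abs_sub_comm]
      exact mul_le_mul_of_nonneg_left h1 (abs_nonneg _)
    have t3 : |(p - q') * φ WP| ≤ |p - q'| * Cφ := by
      rw [abs_mul]
      exact mul_le_mul_of_nonneg_left h4 (abs_nonneg _)
    have t4 : |q' * (φ WP - φ WQ)| ≤ 1 * ((L : ℝ) * (CW * D s)) := by
      rw [abs_mul]
      refine mul_le_mul (abs_le.2 ⟨by linarith [hq.1], hq.2⟩)
        (h5.trans (mul_le_mul_of_nonneg_left h3 L.coe_nonneg)) (abs_nonneg _) zero_le_one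
    calc |d r s| = |(1 - p) * (IP - IQ) + (q' - p) * IQ
        - ((p - q') * φ WP + q' * (φ WP - φ WQ))| := by rw [hrepr]
    _ ≤ |(1 - p) * (IP - IQ) + (q' - p) * IQ| + |(p - q') * φ WP + q' * (φ WP - φ WQ)| :=
        abs_sub _ _
    _ ≤ (|(1 - p) * (IP - IQ)| + |(q' - p) * IQ|)
        + (|(p - q') * φ WP| + |q' * (φ WP - φ WQ)|) :=
        add_le_add (abs_add_le _ _) (abs_add_le _ _)
    _ ≤ (1 * (CJ * D s) + |p - q'| * CJ) + (|p - q'| * Cφ + 1 * ((L : ℝ) * (CW * D s))) := by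
        exact add_le_add (add_le_add t1 t2) (add_le_add t3 t4)
    _ = A * |p - q'| + B * D s := by simp only [hAdef, hBdef]; ring
    _ = A * |f s r| + B * D s := by rw [hfe]
  -- pointwise integral inequality via FTC
  have key : ∀ t ∈ Icc (0:ℝ) T, ∀ r : Γ,
      |f t r| ≤ |f 0 r| + ∫ s in (0:ℝ)..t, (A * |f s r| + B * D s) := by
    intro t ht r
    have hdm : Measurable (d r) := by
      have hPm : Measurable fun s => P s r := hPmeas.comp (measurable_id.prodMk measurable_const)
      have hQm : Measurable fun s => Q s r := hQmeas.comp (measurable_id.prodMk measurable_const)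
      have hIP : Measurable fun s => ∫ r', J r' r * P s r' ∂q := by
        have h : Measurable fun p : ℝ × Γ => J p.2 r * P p.1 p.2 :=
          (hJmeas.comp (measurable_snd.prodMk measurable_const)).mul hPmeas
        exact h.stronglyMeasurable.integral_prod_right'.measurable
      have hIQ : Measurable fun s => ∫ r', J r' r * Q s r' ∂q := by
        have h : Measurable fun p : ℝ × Γ => J p.2 r * Q p.1 p.2 :=
          (hJmeas.comp (measurable_snd.prodMk measurable_const)).mul hQmeas
        exact h.stronglyMeasurable.integral_prod_right'.measurable
      have hWP : Measurable fun s => ∫ r', W r' r * (1 - P s r') ∂q := by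
        have h : Measurable fun p : ℝ × Γ => W p.2 r * (1 - P p.1 p.2) :=
          (hWmeas.comp (measurable_snd.prodMk measurable_const)).mul
            (measurable_const.sub hPmeas)
        exact h.stronglyMeasurable.integral_prod_right'.measurable
      have hWQ : Measurable fun s => ∫ r', W r' r * (1 - Q s r') ∂q := by
        have h : Measurable fun p : ℝ × Γ => W p.2 r * (1 - Q p.1 p.2) :=
          (hWmeas.comp (measurable_snd.prodMk measurable_const)).mul
            (measurable_const.sub hQmeas)
        exact h.stronglyMeasurable.integral_prod_right'.measurable
      exact (((measurable_const.sub hPm).mul hIP).sub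
          (hPm.mul (hφ.continuous.measurable.comp hWP))).sub
        (((measurable_const.sub hQm).mul hIQ).sub
          (hQm.mul (hφ.continuous.measurable.comp hWQ)))
    haveI : IsFiniteMeasure (volume.restrict (Ioc (0:ℝ) t)) :=
      ⟨by rw [Measure.restrict_apply_univ]; exact measure_Ioc_lt_top⟩
    have hdint : IntervalIntegrable (d r) volume 0 t := by
      rw [intervalIntegrable_iff_integrableOn_Ioc_of_le ht.1]
      refine (integrable_const (A + B)).mono' hdm.aestronglyMeasurable ?_
      refine (ae_restrict_iff' measurableSet_Ioc).2 (Eventually.of_forall fun s hsm => ?_)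
      have hs : s ∈ Icc (0:ℝ) T := ⟨hsm.1.le, hsm.2.trans ht.2⟩
      have hb := hdbound r s hs
      have h1 : A * |f s r| ≤ A * 1 := mul_le_mul_of_nonneg_left (hfbdd s r) hA0
      have h2 : B * D s ≤ B * 1 := mul_le_mul_of_nonneg_left (hD1 s) hB0
      rw [Real.norm_eq_abs]
      linarith
    have hcont : ContinuousOn (fun s => P s r - Q s r) (Icc 0 t) :=
      ((hPcont r).sub (hQcont r)).mono (Icc_subset_Icc le_rfl ht.2)
    have hderiv : ∀ x ∈ Ioo (0:ℝ) t,
        HasDerivWithinAt (fun s => P s r - Q s r) (d r x) (Ioi x) x := by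
      intro x hx
      have hx' : x ∈ Icc (0:ℝ) T := ⟨hx.1.le, hx.2.le.trans ht.2⟩
      have hder := (hPeq r x hx').sub (hQeq r x hx')
      have hnb : Icc (0:ℝ) T ∈ nhds x := Icc_mem_nhds hx.1 (hx.2.trans_le ht.2)
      exact (hder.hasDerivAt hnb).hasDerivWithinAt
    have heq := intervalIntegral.integral_eq_sub_of_hasDeriv_right_of_le ht.1 hcont hderiv hdint
    have hgint : IntervalIntegrable (fun s => A * |f s r| + B * D s) volume 0 t :=
      ((continuous_const.mul (hfcontr r).abs).add
        (continuous_const.mul hDcont)).intervalIntegrable 0 t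
    have hbnd : ‖∫ s in (0:ℝ)..t, d r s‖ ≤ |∫ s in (0:ℝ)..t, (A * |f s r| + B * D s)| := by
      refine (intervalIntegral.norm_integral_le_of_norm_le ht.1 ?_ hgint).trans (le_abs_self _)
      refine Eventually.of_forall fun s hsm => ?_
      have hs : s ∈ Icc (0:ℝ) T := ⟨hsm.1.le, hsm.2.trans ht.2⟩
      rw [Real.norm_eq_abs]
      exact hdbound r s hs
    have hgnn : 0 ≤ ∫ s in (0:ℝ)..t, (A * |f s r| + B * D s) :=
      intervalIntegral.integral_nonneg ht.1 fun s _ =>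
        add_nonneg (mul_nonneg hA0 (abs_nonneg _)) (mul_nonneg hB0 (hD0 s))
    rw [abs_of_nonneg hgnn] at hbnd
    have hfe : f t r = P t r - Q t r := by simp only [hfdef, hπid t ht]
    have hfe0 : f 0 r = P 0 r - Q 0 r := by simp only [hfdef, hπid 0 (left_mem_Icc.2 hT0)]
    have hsum : f t r = f 0 r + ∫ s in (0:ℝ)..t, d r s := by rw [hfe, hfe0, heq]; ring
    rw [hsum]
    calc |f 0 r + ∫ s in (0:ℝ)..t, d r s| ≤ |f 0 r| + |∫ s in (0:ℝ)..t, d r s| := abs_add_le _ _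
    _ ≤ |f 0 r| + ∫ s in (0:ℝ)..t, (A * |f s r| + B * D s) := by
        refine add_le_add le_rfl ?_
        rw [← Real.norm_eq_abs]
        exact hbnd
  -- the integral inequality for D
  set K : ℝ := A + B with hKdef
  have hDle : ∀ t ∈ Icc (0:ℝ) T, D t ≤ K * ∫ s in (0:ℝ)..t, D s := by
    intro t ht
    haveI : IsFiniteMeasure (volume.restrict (Ioc (0:ℝ) t)) :=
      ⟨by rw [Measure.restrict_apply_univ]; exact measure_Ioc_lt_top⟩
    have hFm : Measurable fun p : Γ × ℝ => A * |f p.2 p.1| + B * D p.2 := by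
      have h1 : Measurable fun p : Γ × ℝ => f p.2 p.1 :=
        hfm.comp (measurable_snd.prodMk measurable_fst)
      exact (measurable_const.mul h1.abs).add
        (measurable_const.mul (hDcont.measurable.comp measurable_snd))
    have hFbdd : ∀ (r : Γ) (s : ℝ), A * |f s r| + B * D s ≤ K := by
      intro r s
      have h1 : A * |f s r| ≤ A * 1 := mul_le_mul_of_nonneg_left (hfbdd s r) hA0
      have h2 : B * D s ≤ B * 1 := mul_le_mul_of_nonneg_left (hD1 s) hB0
      simp only [hKdef]; linarith
    have hFnn : ∀ (r : Γ) (s : ℝ), 0 ≤ A * |f s r| + B * D s := fun r s =>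
      add_nonneg (mul_nonneg hA0 (abs_nonneg _)) (mul_nonneg hB0 (hD0 s))
    have hint1 : ∀ r : Γ, Integrable (fun s => A * |f s r| + B * D s)
        (volume.restrict (Ioc (0:ℝ) t)) := fun r =>
      ((continuous_const.mul (hfcontr r).abs).add
        (continuous_const.mul hDcont)).integrableOn_Ioc
    have hG2m : Measurable fun r => ∫ s in Ioc (0:ℝ) t, (A * |f s r| + B * D s) :=
      hFm.stronglyMeasurable.integral_prod_right'.measurable
    have hIocvol : (volume (Ioc (0:ℝ) t)).toReal = t := by
      rw [Real.volume_Ioc, ENNReal.toReal_ofReal (by linarith [ht.1] : (0:ℝ) ≤ t - 0)]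
      ring
    have hG2bdd : ∀ r : Γ, |∫ s in Ioc (0:ℝ) t, (A * |f s r| + B * D s)| ≤ K * t := by
      intro r
      have hub : (∫ s in Ioc (0:ℝ) t, (A * |f s r| + B * D s)) ≤ K * t := by
        calc (∫ s in Ioc (0:ℝ) t, (A * |f s r| + B * D s))
            ≤ ∫ _s in Ioc (0:ℝ) t, K := integral_mono (hint1 r) (integrable_const K)
              fun s => hFbdd r s
        _ = K * t := by
            rw [setIntegral_const, smul_eq_mul, measureReal_def, hIocvol, mul_comm]
      have hlb : 0 ≤ ∫ s in Ioc (0:ℝ) t, (A * |f s r| + B * D s) :=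
        integral_nonneg fun s => hFnn r s
      rw [abs_of_nonneg hlb]
      exact hub
    have hG2int : Integrable (fun r => ∫ s in Ioc (0:ℝ) t, (A * |f s r| + B * D s)) q :=
      intbdd hG2m hG2bdd
    have h00 : (∫ r, |f 0 r| ∂q) = 0 := by
      have hae : (fun r => |f 0 r|) =ᵐ[q] fun _ => 0 := by
        filter_upwards [hinit] with r hr
        simp [hfdef, hπid 0 (left_mem_Icc.2 hT0), hr]
      rw [integral_congr_ae hae, integral_zero]
    have hswap : (∫ r, (∫ s in Ioc (0:ℝ) t, (A * |f s r| + B * D s)) ∂q)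
        = ∫ s in Ioc (0:ℝ) t, (∫ r, (A * |f s r| + B * D s) ∂q) := by
      apply integral_integral_swap (f := fun r s => A * |f s r| + B * D s)
      refine (integrable_const K).mono' hFm.aestronglyMeasurable ?_
      refine Eventually.of_forall ?_
      rintro ⟨r, s⟩
      rw [Function.uncurry_apply_pair, Real.norm_eq_abs, abs_of_nonneg (hFnn r s)]
      exact hFbdd r s
    have hinner : ∀ s : ℝ, (∫ r, (A * |f s r| + B * D s) ∂q) = K * D s := by
      intro s
      rw [integral_add ((hfint s).const_mul A) (integrable_const (B * D s)),
        integral_const_mul, integral_const]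
      simp [hKdef]
      ring
    have hkey' : ∀ r : Γ, |f t r| ≤ |f 0 r| + ∫ s in Ioc (0:ℝ) t, (A * |f s r| + B * D s) := by
      intro r
      have h := key t ht r
      rwa [intervalIntegral.integral_of_le ht.1] at h
    calc D t = ∫ r, |f t r| ∂q := rfl
    _ ≤ ∫ r, (|f 0 r| + ∫ s in Ioc (0:ℝ) t, (A * |f s r| + B * D s)) ∂q :=
        integral_mono (hfint t) ((hfint 0).add hG2int) hkey'
    _ = (∫ r, |f 0 r| ∂q) + ∫ r, (∫ s in Ioc (0:ℝ) t, (A * |f s r| + B * D s)) ∂q :=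
        integral_add (hfint 0) hG2int
    _ = ∫ r, (∫ s in Ioc (0:ℝ) t, (A * |f s r| + B * D s)) ∂q := by rw [h00, zero_add]
    _ = ∫ s in Ioc (0:ℝ) t, (∫ r, (A * |f s r| + B * D s) ∂q) := hswap
    _ = ∫ s in Ioc (0:ℝ) t, K * D s :=
        integral_congr_ae (Eventually.of_forall fun s => hinner s)
    _ = K * ∫ s in Ioc (0:ℝ) t, D s := integral_const_mul K _
    _ = K * ∫ s in (0:ℝ)..t, D s := by rw [intervalIntegral.integral_of_le ht.1]
  -- Gronwall
  have hK0 : 0 ≤ K := add_nonneg hA0 hB0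
  have hg : ∀ x : ℝ, HasDerivAt (fun u => ∫ s in (0:ℝ)..u, D s) (D x) x := fun x =>
    (hDcont.integral_hasStrictDerivAt 0 x).hasDerivAt
  have hgc : ContinuousOn (fun u => ∫ s in (0:ℝ)..u, D s) (Icc 0 T) :=
    (continuous_iff_continuousAt.2 fun x => (hg x).continuousAt).continuousOn
  have ha : ‖∫ s in (0:ℝ)..(0:ℝ), D s‖ ≤ 0 := by simp
  have hbound : ∀ x ∈ Ico (0:ℝ) T, ‖D x‖ ≤ K * ‖∫ s in (0:ℝ)..x, D s‖ + 0 := by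
    intro x hx
    have hgn : 0 ≤ ∫ s in (0:ℝ)..x, D s :=
      intervalIntegral.integral_nonneg hx.1 fun s _ => hD0 s
    rw [Real.norm_eq_abs, Real.norm_eq_abs, abs_of_nonneg (hD0 x), abs_of_nonneg hgn, add_zero]
    exact hDle x ⟨hx.1, hx.2.le⟩
  have hgron := norm_le_gronwallBound_of_norm_deriv_right_le hgc
    (fun x _ => (hg x).hasDerivWithinAt) ha hbound
  have hDzero : ∀ t ∈ Icc (0:ℝ) T, D t = 0 := by
    intro t ht
    have h1 := hgron t ht
    rw [gronwallBound_ε0_δ0] at h1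
    have h2 : (∫ s in (0:ℝ)..t, D s) = 0 := norm_le_zero_iff.1 h1
    have h3 := hDle t ht
    rw [h2, mul_zero] at h3
    exact le_antisymm h3 (hD0 t)
  -- conclusion
  intro t ht
  have h0 : (∫ r, |f t r| ∂q) = 0 := hDzero t ht
  have hae := (integral_eq_zero_iff_of_nonneg (fun r => abs_nonneg _) (hfint t)).1 h0
  filter_upwards [hae] with r hr
  simp only [Pi.zero_apply] at hr
  have hz : f t r = 0 := abs_eq_zero.1 hr
  have hfe : f t r = P t r - Q t r := by simp only [hfdef, hπid t ht]
  rw [hfe] at hz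
  linarith
end

section
/- Let Γ ⊂ ℝ² be compact, q a Borel probability measure on Γ, J, W : Γ × Γ → ℝ bounded continuous nonnegative kernels, and φ : ℝ → ℝ nonnegative, bounded, and Lipschitz continuous. Then for every continuous initial datum P₀ : Γ → [0,1] there exists a unique P : [0,∞) × Γ → ℝ, continuous in (t,r) and continuously differentiable in t, satisfying P(0,·) = P₀ and the forest-grass integro-differential equation ∂_t P_F(t,r) = (1 − P_F(t,r)) ∫_Γ J(r',r) P_F(t,r') dq(r') − P_F(t,r) φ(∫_Γ W(r',r) (1 − P_F(t,r')) dq(r')); moreover P(t,r) ∈ [0,1] for all t ≥ 0 and r ∈ Γ. -/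
set_option linter.unusedSectionVars false
set_option linter.unusedVariables false

open Set MeasureTheory intervalIntegral

namespace ForestGrassAux

noncomputable section

/-- clamp to `[0,1]` as a continuous map. -/
def cl : C(ℝ, ℝ) := ⟨fun x => max 0 (min 1 x), by
  exact continuous_const.max (continuous_const.min continuous_id)⟩

lemma cl_apply (x : ℝ) : cl x = max 0 (min 1 x) := rfl

lemma cl_mem (x : ℝ) : cl x ∈ Icc (0:ℝ) 1 := by
  refine ⟨le_max_left _ _, ?_⟩
  rw [cl_apply]
  exact max_le (by norm_num) (min_le_left _ _)

lemma cl_eq {x : ℝ} (h : x ∈ Icc (0:ℝ) 1) : cl x = x := by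
  rw [cl_apply, min_eq_right h.2, max_eq_right h.1]

lemma cl_of_nonpos {x : ℝ} (h : x ≤ 0) : cl x = 0 := by
  rw [cl_apply, min_eq_right (h.trans (by norm_num)), max_eq_left h]

lemma cl_of_one_le {x : ℝ} (h : 1 ≤ x) : cl x = 1 := by
  rw [cl_apply, min_eq_left h, max_eq_right (by norm_num)]

lemma abs_cl_sub_cl (x y : ℝ) : |cl x - cl y| ≤ |x - y| := by
  rw [cl_apply, cl_apply, max_comm 0 (min 1 x), max_comm 0 (min 1 y)]
  refine (abs_max_sub_max_le_abs _ _ _).trans ?_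
  refine (abs_min_sub_min_le_max _ _ _ _).trans ?_
  simp

lemma abs_cl_le (x : ℝ) : |cl x| ≤ 1 := by
  have := cl_mem x
  rw [abs_of_nonneg this.1]; exact this.2

variable {X : Type*} [TopologicalSpace X] [MeasurableSpace X] [OpensMeasurableSpace X]
  [CompactSpace X] [FirstCountableTopology X]

/-- Kernel integral functional. -/
def kint (q : Measure X) (Kk : X → X → ℝ) (u : C(X, ℝ)) (r : X) : ℝ :=
  ∫ r', Kk r' r * u r' ∂q

variable {q : Measure X} [IsProbabilityMeasure q] {Kk : X → X → ℝ} {C : ℝ}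

lemma kint_integrable (hKc : Continuous fun p : X × X => Kk p.1 p.2)
    (hKb : ∀ r' r : X, |Kk r' r| ≤ C) (u : C(X, ℝ)) (r : X) :
    Integrable (fun r' => Kk r' r * u r') q := by
  refine (integrable_const (C * ‖u‖)).mono'
    ((hKc.comp (continuous_id.prodMk continuous_const)).mul u.continuous).aestronglyMeasurable
    (ae_of_all _ fun r' => ?_)
  rw [norm_mul]
  exact mul_le_mul (hKb r' r) (u.norm_coe_le_norm r') (norm_nonneg _)
    ((abs_nonneg _).trans (hKb r' r))

lemma kint_abs_le (hKc : Continuous fun p : X × X => Kk p.1 p.2)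
    (hKb : ∀ r' r : X, |Kk r' r| ≤ C) (u : C(X, ℝ)) (r : X) :
    |kint q Kk u r| ≤ C * ‖u‖ := by
  have := norm_integral_le_of_norm_le_const (μ := q) (f := fun r' => Kk r' r * u r')
    (C := C * ‖u‖) (ae_of_all _ fun r' => by
      rw [norm_mul]
      exact mul_le_mul (hKb r' r) (u.norm_coe_le_norm r') (norm_nonneg _)
        ((abs_nonneg _).trans (hKb r' r)))
  simpa [kint, measure_univ] using this

lemma kint_sub (hKc : Continuous fun p : X × X => Kk p.1 p.2)
    (hKb : ∀ r' r : X, |Kk r' r| ≤ C) (u v : C(X, ℝ)) (r : X) :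
    kint q Kk u r - kint q Kk v r = kint q Kk (u - v) r := by
  rw [kint, kint, kint, ← integral_sub (kint_integrable hKc hKb u r) (kint_integrable hKc hKb v r)]
  congr 1
  funext r'
  simp [mul_sub]

lemma kint_lip (hKc : Continuous fun p : X × X => Kk p.1 p.2)
    (hKb : ∀ r' r : X, |Kk r' r| ≤ C) (u v : C(X, ℝ)) (r : X) :
    |kint q Kk u r - kint q Kk v r| ≤ C * ‖u - v‖ := by
  rw [kint_sub hKc hKb]
  exact kint_abs_le hKc hKb _ r

lemma kint_nonneg (hK : ∀ r' r : X, 0 ≤ Kk r' r) {u : C(X, ℝ)} (hu : ∀ x, 0 ≤ u x) (r : X) :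
    0 ≤ kint q Kk u r :=
  integral_nonneg fun r' => mul_nonneg (hK r' r) (hu r')

lemma kint_continuous (hKc : Continuous fun p : X × X => Kk p.1 p.2)
    (hKb : ∀ r' r : X, |Kk r' r| ≤ C) (u : C(X, ℝ)) :
    Continuous (kint q Kk u) := by
  refine continuous_of_dominated (bound := fun _ => C * ‖u‖)
    (fun r => ((hKc.comp (continuous_id.prodMk continuous_const)).mul
      u.continuous).aestronglyMeasurable)
    (fun r => ae_of_all _ fun r' => ?_) (integrable_const _)
    (ae_of_all _ fun r' => (hKc.comp (continuous_const.prodMk continuous_id)).mul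
      continuous_const)
  rw [norm_mul]
  exact mul_le_mul (hKb r' r) (u.norm_coe_le_norm r') (norm_nonneg _)
    ((abs_nonneg _).trans (hKb r' r))

lemma kint_lipschitzWith (hKc : Continuous fun p : X × X => Kk p.1 p.2)
    (hKb : ∀ r' r : X, |Kk r' r| ≤ C) (r : X) :
    LipschitzWith (Real.toNNReal C) (fun u : C(X, ℝ) => kint q Kk u r) := by
  refine LipschitzWith.of_dist_le_mul fun u v => ?_
  rw [Real.dist_eq, Real.coe_toNNReal', dist_eq_norm]
  refine (kint_lip hKc hKb u v r).trans ?_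
  exact mul_le_mul_of_nonneg_right (le_max_left _ _) (norm_nonneg _)

end

end ForestGrassAux

section Part2

namespace ForestGrassAux

noncomputable section

variable {X : Type*} [TopologicalSpace X] [MeasurableSpace X] [OpensMeasurableSpace X]
  [CompactSpace X] [FirstCountableTopology X]

/-- The clamped forest-grass vector field, as a bare function. -/
def FF (q : Measure X) (J W : X → X → ℝ) (φ : ℝ → ℝ) (u : C(X, ℝ)) (r : X) : ℝ :=
  (1 - cl (u r)) * kint q J (cl.comp u) r - cl (u r) * φ (kint q W (1 - cl.comp u) r)

variable {q : Measure X} [IsProbabilityMeasure q] {J W : X → X → ℝ} {φ : ℝ → ℝ}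
  {CJ CW Cφ : ℝ} {L : NNReal}

lemma norm_cl_comp_le (u : C(X, ℝ)) : ‖cl.comp u‖ ≤ 1 :=
  (ContinuousMap.norm_le _ zero_le_one).mpr fun r => abs_cl_le (u r)

lemma norm_one_sub_cl_comp_le (u : C(X, ℝ)) : ‖(1 : C(X, ℝ)) - cl.comp u‖ ≤ 1 := by
  refine (ContinuousMap.norm_le _ zero_le_one).mpr fun r => ?_
  have h := cl_mem (u r)
  simp only [ContinuousMap.sub_apply, ContinuousMap.one_apply, ContinuousMap.comp_apply,
    Real.norm_eq_abs]
  rw [abs_of_nonneg (by linarith [h.2])]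
  linarith [h.1]

lemma norm_cl_comp_sub_le (u v : C(X, ℝ)) : ‖cl.comp u - cl.comp v‖ ≤ ‖u - v‖ := by
  refine (ContinuousMap.norm_le _ (norm_nonneg _)).mpr fun r => ?_
  simp only [ContinuousMap.sub_apply, ContinuousMap.comp_apply, Real.norm_eq_abs]
  exact (abs_cl_sub_cl (u r) (v r)).trans (by
    have := (u - v).norm_coe_le_norm r
    simpa [Real.norm_eq_abs] using this)

lemma FF_continuous (hJc : Continuous fun p : X × X => J p.1 p.2)
    (hWc : Continuous fun p : X × X => W p.1 p.2)
    (hJb : ∀ r' r : X, |J r' r| ≤ CJ) (hWb : ∀ r' r : X, |W r' r| ≤ CW)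
    (hφc : Continuous φ) (u : C(X, ℝ)) :
    Continuous (FF q J W φ u) := by
  refine ((continuous_const.sub ((cl.continuous).comp u.continuous)).mul
    (kint_continuous hJc hJb _)).sub
    (((cl.continuous).comp u.continuous).mul (hφc.comp (kint_continuous hWc hWb _)))

/-- The key elementary inequality for Lipschitz estimates of the field. -/
lemma keyineq {a a' A A' B B' M CA CB d LW : ℝ} (hM : 0 ≤ M) (ha : |a| ≤ M) (ha' : |a'| ≤ M)
    (haa : |a - a'| ≤ d) (hAA : |A - A'| ≤ CA * d) (hA' : |A'| ≤ CA * M)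
    (hBB : |B - B'| ≤ LW * d) (hB' : |B'| ≤ CB) (hd : 0 ≤ d)
    (hCA : 0 ≤ CA) (hLW : 0 ≤ LW) :
    |((1 - a) * A - a * B) - ((1 - a') * A' - a' * B')| ≤ ((1 + 2 * M) * CA + M * LW + CB) * d := by
  have e : ((1 - a) * A - a * B) - ((1 - a') * A' - a' * B')
      = (1 - a) * (A - A') + (a' - a) * A' - (a * (B - B') + (a - a') * B') := by ring
  rw [e]
  have h1 : |(1 - a) * (A - A')| ≤ (1 + M) * (CA * d) := by
    rw [abs_mul]
    refine mul_le_mul ?_ hAA (abs_nonneg _) (by linarith)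
    calc |1 - a| ≤ |1| + |a| := abs_sub _ _
      _ ≤ 1 + M := by rw [abs_one]; linarith
  have h2 : |(a' - a) * A'| ≤ d * (CA * M) := by
    rw [abs_mul, abs_sub_comm]
    exact mul_le_mul haa hA' (abs_nonneg _) hd
  have h3 : |a * (B - B')| ≤ M * (LW * d) := by
    rw [abs_mul]
    exact mul_le_mul ha hBB (abs_nonneg _) hM
  have h4 : |(a - a') * B'| ≤ d * CB := by
    rw [abs_mul]
    exact mul_le_mul haa hB' (abs_nonneg _) hd
  calc |(1 - a) * (A - A') + (a' - a) * A' - (a * (B - B') + (a - a') * B')|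
      ≤ |(1 - a) * (A - A') + (a' - a) * A'| + |a * (B - B') + (a - a') * B'| := abs_sub _ _
    _ ≤ (|(1 - a) * (A - A')| + |(a' - a) * A'|) + (|a * (B - B')| + |(a - a') * B'|) := by
        gcongr <;> exact abs_add_le _ _
    _ ≤ ((1 + M) * (CA * d) + d * (CA * M)) + (M * (LW * d) + d * CB) := by
        gcongr
    _ = ((1 + 2 * M) * CA + M * LW + CB) * d := by ring

lemma FF_bound (hJc : Continuous fun p : X × X => J p.1 p.2)
    (hJb : ∀ r' r : X, |J r' r| ≤ CJ)
    (hφnn : ∀ x, 0 ≤ φ x) (hφb : ∀ x, φ x ≤ Cφ) (u : C(X, ℝ)) (r : X) :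
    |FF q J W φ u r| ≤ CJ + Cφ := by
  have hA : |kint q J (cl.comp u) r| ≤ CJ * 1 :=
    (kint_abs_le hJc hJb _ r).trans
      (mul_le_mul_of_nonneg_left (norm_cl_comp_le u)
        ((abs_nonneg _).trans (hJb r r)))
  have hB : |φ (kint q W (1 - cl.comp u) r)| ≤ Cφ := by
    rw [abs_of_nonneg (hφnn _)]; exact hφb _
  have hcla := cl_mem (u r)
  have h1 : |(1 - cl (u r)) * kint q J (cl.comp u) r| ≤ CJ := by
    rw [abs_mul]
    calc |1 - cl (u r)| * |kint q J (cl.comp u) r| ≤ 1 * (CJ * 1) := by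
          refine mul_le_mul ?_ hA (abs_nonneg _) zero_le_one
          rw [abs_of_nonneg (by linarith [hcla.2])]; linarith [hcla.1]
      _ = CJ := by ring
  have h2 : |cl (u r) * φ (kint q W (1 - cl.comp u) r)| ≤ Cφ := by
    rw [abs_mul]
    calc |cl (u r)| * |φ _| ≤ 1 * Cφ :=
          mul_le_mul (abs_cl_le _) hB (abs_nonneg _) zero_le_one
      _ = Cφ := one_mul _
  calc |FF q J W φ u r| ≤ |(1 - cl (u r)) * kint q J (cl.comp u) r| +
        |cl (u r) * φ (kint q W (1 - cl.comp u) r)| := abs_sub _ _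
    _ ≤ CJ + Cφ := add_le_add h1 h2

lemma FF_lip (hJc : Continuous fun p : X × X => J p.1 p.2)
    (hWc : Continuous fun p : X × X => W p.1 p.2)
    (hJb : ∀ r' r : X, |J r' r| ≤ CJ) (hWb : ∀ r' r : X, |W r' r| ≤ CW)
    (hφL : LipschitzWith L φ)
    (hφnn : ∀ x, 0 ≤ φ x) (hφb : ∀ x, φ x ≤ Cφ) (u v : C(X, ℝ)) (r : X) :
    |FF q J W φ u r - FF q J W φ v r| ≤ ((1 + 2 * 1) * CJ + 1 * ((L : ℝ) * CW) + Cφ) * ‖u - v‖ := by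
  have hCJ : 0 ≤ CJ := (abs_nonneg _).trans (hJb r r)
  have hCW : 0 ≤ CW := (abs_nonneg _).trans (hWb r r)
  have hCφ : 0 ≤ Cφ := (hφnn 0).trans (hφb 0)
  refine keyineq zero_le_one (abs_cl_le _) (abs_cl_le _) ?_ ?_ ?_ ?_ ?_ (norm_nonneg _) hCJ
    (mul_nonneg L.2 hCW)
  · exact (abs_cl_sub_cl _ _).trans (by simpa [Real.norm_eq_abs] using (u - v).norm_coe_le_norm r)
  · refine (kint_lip hJc hJb _ _ r).trans ?_
    exact mul_le_mul_of_nonneg_left (norm_cl_comp_sub_le u v) hCJ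
  · exact (kint_abs_le hJc hJb _ r).trans
      (mul_le_mul_of_nonneg_left (norm_cl_comp_le v) hCJ)
  · have hstep : |kint q W (1 - cl.comp u) r - kint q W (1 - cl.comp v) r| ≤ CW * ‖u - v‖ := by
      refine (kint_lip hWc hWb _ _ r).trans ?_
      have : (1 : C(X,ℝ)) - cl.comp u - ((1 : C(X,ℝ)) - cl.comp v) = -(cl.comp u - cl.comp v) := by
        ring
      rw [this, norm_neg]
      exact mul_le_mul_of_nonneg_left (norm_cl_comp_sub_le u v) hCW
    have := hφL.dist_le_mul (kint q W (1 - cl.comp u) r) (kint q W (1 - cl.comp v) r)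
    rw [Real.dist_eq, Real.dist_eq] at this
    calc |φ (kint q W (1 - cl.comp u) r) - φ (kint q W (1 - cl.comp v) r)|
        ≤ (L : ℝ) * |kint q W (1 - cl.comp u) r - kint q W (1 - cl.comp v) r| := this
      _ ≤ (L : ℝ) * (CW * ‖u - v‖) := mul_le_mul_of_nonneg_left hstep L.2
      _ = (L : ℝ) * CW * ‖u - v‖ := by ring
  · rw [abs_of_nonneg (hφnn _)]; exact hφb _

end

end ForestGrassAux

end Part2

namespace ForestGrassAux

/-- If `u` has right derivative `g` on `[0,∞)`, starts nonnegative, and the derivative is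
nonnegative whenever `u ≤ 0`, then `u` stays nonnegative. -/
lemma nonneg_of_deriv {u g : ℝ → ℝ}
    (hc : ContinuousOn u (Ici 0))
    (hd : ∀ t ∈ Ici (0:ℝ), HasDerivWithinAt u (g t) (Ici 0) t)
    (h0 : 0 ≤ u 0)
    (hg : ∀ t ∈ Ici (0:ℝ), u t ≤ 0 → 0 ≤ g t) :
    ∀ t ∈ Ici (0:ℝ), 0 ≤ u t := by
  intro t₁ ht₁
  by_contra hneg
  push_neg at hneg
  have ht₁0 : 0 < t₁ := by
    rcases lt_or_eq_of_le (show (0:ℝ) ≤ t₁ from ht₁) with h | h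
    · exact h
    · exfalso; rw [← h] at hneg; linarith
  set S : Set ℝ := Icc 0 t₁ ∩ u ⁻¹' (Ici 0) with hS
  have hSclosed : IsClosed S :=
    ContinuousOn.preimage_isClosed_of_isClosed (hc.mono (Icc_subset_Ici_self))
      isClosed_Icc isClosed_Ici
  have hSne : S.Nonempty := ⟨0, ⟨le_rfl, ht₁0.le⟩, h0⟩
  have hSbdd : BddAbove S := ⟨t₁, fun x hx => hx.1.2⟩
  set s := sSup S with hs
  have hsS : s ∈ S := hSclosed.csSup_mem hSne hSbdd
  have hs0 : 0 ≤ s := hsS.1.1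
  have hsu : 0 ≤ u s := hsS.2
  have hst : s ≤ t₁ := hsS.1.2
  have hslt : s < t₁ := lt_of_le_of_ne hst (fun h => by rw [h] at hsu; linarith)
  have hneg' : ∀ τ ∈ Ioc s t₁, u τ < 0 := by
    intro τ hτ
    by_contra hτu
    push_neg at hτu
    have : τ ∈ S := ⟨⟨hs0.trans hτ.1.le, hτ.2⟩, hτu⟩
    exact absurd (le_csSup hSbdd this) (not_le.mpr hτ.1)
  have key : ∀ s' ∈ Ioc s t₁, u s' ≤ u t₁ := by
    intro s' hs'
    have hs'0 : 0 < s' := lt_of_le_of_lt hs0 hs'.1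
    have hmono : MonotoneOn u (Icc s' t₁) := by
      refine monotoneOn_of_deriv_nonneg (convex_Icc _ _)
        (hc.mono fun x hx => hs'0.le.trans hx.1) ?_ ?_
      · rw [interior_Icc]
        intro τ hτ
        exact ((hd τ (hs'0.trans hτ.1).le).hasDerivAt
          (Ici_mem_nhds (hs'0.trans hτ.1))).differentiableAt.differentiableWithinAt
      · rw [interior_Icc]
        intro τ hτ
        have hDA := (hd τ (hs'0.trans hτ.1).le).hasDerivAt (Ici_mem_nhds (hs'0.trans hτ.1))
        rw [hDA.deriv]
        exact hg τ (hs'0.trans hτ.1).le (hneg' τ ⟨hs'.1.trans hτ.1, hτ.2.le⟩).le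
    exact hmono ⟨le_rfl, hs'.2⟩ ⟨hs'.2, le_rfl⟩ hs'.2
  have htend : Filter.Tendsto u (nhdsWithin s (Ioc s t₁)) (nhds (u s)) :=
    ((hc s hs0).mono (fun x hx => hs0.trans hx.1.le)).tendsto
  have hnebot : (nhdsWithin s (Ioc s t₁)).NeBot := by
    rw [nhdsWithin_Ioc_eq_nhdsGT hslt]
    infer_instance
  have : u s ≤ u t₁ :=
    le_of_tendsto htend (Filter.eventually_of_mem self_mem_nhdsWithin key)
  linarith
end ForestGrassAux

namespace ForestGrassAux

noncomputable section

variable {X : Type*} [TopologicalSpace X] [MeasurableSpace X] [OpensMeasurableSpace X]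
  [CompactSpace X] [FirstCountableTopology X]

/-- Evaluation at a point as a continuous linear map on `C(X, ℝ)`. -/
def evC (r : X) : C(X, ℝ) →L[ℝ] ℝ :=
  LinearMap.mkContinuous
    { toFun := fun u => u r, map_add' := fun _ _ => rfl, map_smul' := fun _ _ => rfl } 1
    (fun u => by rw [one_mul]; exact u.norm_coe_le_norm r)

@[simp] lemma evC_apply (r : X) (u : C(X, ℝ)) : evC r u = u r := rfl

/-- The (unclamped) right-hand side along a curve of continuous functions. -/
def frhs (q : Measure X) (J W : X → X → ℝ) (φ : ℝ → ℝ) (c : ℝ → C(X, ℝ)) (s : ℝ) (r : X) : ℝ :=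
  (1 - c s r) * kint q J (c s) r - c s r * φ (kint q W (1 - c s) r)

variable {q : Measure X} [IsProbabilityMeasure q] {J W : X → X → ℝ} {φ : ℝ → ℝ} {CJ CW : ℝ}

lemma frhs_continuous (hJc : Continuous fun p : X × X => J p.1 p.2)
    (hWc : Continuous fun p : X × X => W p.1 p.2)
    (hJb : ∀ r' r : X, |J r' r| ≤ CJ) (hWb : ∀ r' r : X, |W r' r| ≤ CW)
    (hφc : Continuous φ) {c : ℝ → C(X, ℝ)} (hc : Continuous c) (r : X) :
    Continuous fun s => frhs q J W φ c s r := by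
  have h1 : Continuous fun s => c s r := (evC r).continuous.comp hc
  have h2 : Continuous fun s => kint q J (c s) r :=
    ((kint_lipschitzWith hJc hJb r).continuous).comp hc
  have h3 : Continuous fun s => kint q W (1 - c s) r :=
    ((kint_lipschitzWith hWc hWb r).continuous).comp (continuous_const.sub hc)
  exact ((continuous_const.sub h1).mul h2).sub (h1.mul (hφc.comp h3))

end

end ForestGrassAux

open ForestGrassAux

/-- Well-posedness of the forest-grass integro-differential equation on a
compact landscape `Γ ⊂ ℝ²` with a Borel probability site measure `q`, bounded continuous
nonnegative kernels and a nonnegative bounded Lipschitz mortality `φ`: for every continuous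
initial datum with values in `[0,1]` there exists a jointly continuous, continuously
time-differentiable solution staying in `[0,1]`, and any two such solutions agree for all
`t ≥ 0`. -/
theorem forest_grass_ide_wellposed
    (Γ : Set (ℝ × ℝ)) (hΓ : IsCompact Γ)
    (q : Measure Γ) [IsProbabilityMeasure q]
    (J W : Γ → Γ → ℝ)
    (hJcont : Continuous fun p : Γ × Γ => J p.1 p.2)
    (hWcont : Continuous fun p : Γ × Γ => W p.1 p.2)
    (hJnn : ∀ r r' : Γ, 0 ≤ J r r') (hWnn : ∀ r r' : Γ, 0 ≤ W r r')
    (CJ CW : ℝ) (hJbdd : ∀ r r' : Γ, J r r' ≤ CJ) (hWbdd : ∀ r r' : Γ, W r r' ≤ CW)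
    (φ : ℝ → ℝ) (L : NNReal) (hφ : LipschitzWith L φ) (hφnn : ∀ x : ℝ, 0 ≤ φ x)
    (Cφ : ℝ) (hφbdd : ∀ x : ℝ, φ x ≤ Cφ)
    (P₀ : Γ → ℝ) (hP₀cont : Continuous P₀) (hP₀range : ∀ r : Γ, P₀ r ∈ Icc (0:ℝ) 1) :
    (∃ P : ℝ → Γ → ℝ,
      (∀ r : Γ, P 0 r = P₀ r) ∧
      ContinuousOn (fun p : ℝ × Γ => P p.1 p.2) (Ici (0:ℝ) ×ˢ univ) ∧
      (∀ r : Γ, ∀ t ∈ Ici (0:ℝ),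
        HasDerivWithinAt (fun s => P s r)
          ((1 - P t r) * (∫ r', J r' r * P t r' ∂q)
            - P t r * φ (∫ r', W r' r * (1 - P t r') ∂q)) (Ici 0) t) ∧
      (∀ t ∈ Ici (0:ℝ), ∀ r : Γ, P t r ∈ Icc (0:ℝ) 1)) ∧
    (∀ P Q : ℝ → Γ → ℝ,
      (∀ r : Γ, P 0 r = P₀ r) →
      ContinuousOn (fun p : ℝ × Γ => P p.1 p.2) (Ici (0:ℝ) ×ˢ univ) →
      (∀ r : Γ, ∀ t ∈ Ici (0:ℝ),
        HasDerivWithinAt (fun s => P s r)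
          ((1 - P t r) * (∫ r', J r' r * P t r' ∂q)
            - P t r * φ (∫ r', W r' r * (1 - P t r') ∂q)) (Ici 0) t) →
      (∀ r : Γ, Q 0 r = P₀ r) →
      ContinuousOn (fun p : ℝ × Γ => Q p.1 p.2) (Ici (0:ℝ) ×ˢ univ) →
      (∀ r : Γ, ∀ t ∈ Ici (0:ℝ),
        HasDerivWithinAt (fun s => Q s r)
          ((1 - Q t r) * (∫ r', J r' r * Q t r' ∂q)
            - Q t r * φ (∫ r', W r' r * (1 - Q t r') ∂q)) (Ici 0) t) →
      ∀ t ∈ Ici (0:ℝ), ∀ r : Γ, P t r = Q t r) := by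
  haveI : CompactSpace ↥Γ := isCompact_iff_compactSpace.mp hΓ
  haveI : Nonempty ↥Γ := by
    by_contra hne
    rw [not_nonempty_iff] at hne
    have h1 : q Set.univ = 1 := measure_univ
    rw [Set.univ_eq_empty_iff.mpr hne] at h1
    simp at h1
  obtain ⟨r₀⟩ := (inferInstance : Nonempty ↥Γ)
  have hCJ0 : 0 ≤ CJ := (hJnn r₀ r₀).trans (hJbdd r₀ r₀)
  have hCW0 : 0 ≤ CW := (hWnn r₀ r₀).trans (hWbdd r₀ r₀)
  have hCφ0 : 0 ≤ Cφ := (hφnn 0).trans (hφbdd 0)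
  have hJb : ∀ r' r : ↥Γ, |J r' r| ≤ CJ := fun r' r => by
    rw [abs_of_nonneg (hJnn r' r)]; exact hJbdd r' r
  have hWb : ∀ r' r : ↥Γ, |W r' r| ≤ CW := fun r' r => by
    rw [abs_of_nonneg (hWnn r' r)]; exact hWbdd r' r
  set x₀ : C(↥Γ, ℝ) := ⟨P₀, hP₀cont⟩ with hx₀
  set Fc : C(↥Γ, ℝ) → C(↥Γ, ℝ) := fun u =>
    ⟨FF q J W φ u, FF_continuous hJcont hWcont hJb hWb hφ.continuous u⟩ with hFcdef
  have hFc_apply : ∀ u r, Fc u r = FF q J W φ u r := fun u r => rfl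
  have hFcBdd : ∀ u, ‖Fc u‖ ≤ CJ + Cφ := fun u =>
    (ContinuousMap.norm_le _ (by linarith)).mpr fun r => by
      rw [Real.norm_eq_abs, hFc_apply]
      exact FF_bound hJcont hJb hφnn hφbdd u r
  set KL : ℝ := (1 + 2 * 1) * CJ + 1 * ((L : ℝ) * CW) + Cφ with hKL
  have hKL0 : 0 ≤ KL := by
    have := mul_nonneg (L.coe_nonneg) hCW0
    rw [hKL]; nlinarith
  have hFcLip : LipschitzWith (Real.toNNReal KL) Fc := by
    refine LipschitzWith.of_dist_le_mul fun u v => ?_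
    rw [dist_eq_norm, dist_eq_norm, Real.coe_toNNReal _ hKL0]
    refine (ContinuousMap.norm_le _ (mul_nonneg hKL0 (norm_nonneg _))).mpr fun r => ?_
    rw [ContinuousMap.sub_apply, Real.norm_eq_abs, hFc_apply, hFc_apply, hKL]
    exact FF_lip hJcont hWcont hJb hWb hφ hφnn hφbdd u v r
  -- local solutions on [0, n]
  have hex : ∀ n : ℕ, ∃ f : ℝ → C(↥Γ, ℝ), f 0 = x₀ ∧
      ∀ t ∈ Icc (0:ℝ) (n:ℝ), HasDerivWithinAt f (Fc (f t)) (Icc (0:ℝ) (n:ℝ)) t := by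
    intro n
    have hpl : IsPicardLindelof (fun _ x => Fc x) (tmin := 0) (tmax := (n:ℝ))
        ⟨0, le_rfl, Nat.cast_nonneg n⟩ x₀ ((CJ + Cφ).toNNReal * n) 0 (CJ + Cφ).toNNReal
        (Real.toNNReal KL) :=
      { lipschitzOnWith := fun _ _ => fun x _ y _ => hFcLip x y
        continuousOn := fun _ _ => continuousOn_const
        norm_le := fun _ _ x _ => (hFcBdd x).trans (Real.le_coe_toNNReal _)
        mul_max_le := by
          simp only [NNReal.coe_mul, NNReal.coe_natCast, NNReal.coe_zero, sub_zero]
          refine mul_le_mul_of_nonneg_left (max_le ?_ ?_) (NNReal.coe_nonneg _) <;> simp }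
    exact hpl.exists_eq_forall_mem_Icc_hasDerivWithinAt₀
  choose f hf0 hfd using hex
  -- consistency of local solutions
  have hcons : ∀ m n : ℕ, m ≤ n → Set.EqOn (f m) (f n) (Icc (0:ℝ) (m:ℝ)) := by
    intro m n hmn
    have hK : ∀ t : ℝ, LipschitzOnWith (Real.toNNReal KL) ((fun (_ : ℝ) (x : C(↥Γ, ℝ)) => Fc x) t)
        ((fun (_ : ℝ) => (Set.univ : Set C(↥Γ, ℝ))) t) := fun _ => fun x _ y _ => hFcLip x y
    have hmn' : (m:ℝ) ≤ (n:ℝ) := Nat.cast_le.mpr hmn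
    refine ODE_solution_unique_of_mem_Icc_right (fun t _ => hK t)
      (fun t ht => (hfd m t ht).continuousWithinAt) ?_ (fun _ _ => mem_univ _)
      (fun t ht => ((hfd n t (Icc_subset_Icc le_rfl hmn' ht)).continuousWithinAt).mono
        (Icc_subset_Icc le_rfl hmn')) ?_ (fun _ _ => mem_univ _) ?_
    · intro t ht
      exact (hfd m t (Ico_subset_Icc_self ht)).mono_of_mem_nhdsWithin (Icc_mem_nhdsGE_of_mem ht)
    · intro t ht
      have ht' : t ∈ Ico (0:ℝ) (n:ℝ) := ⟨ht.1, lt_of_lt_of_le ht.2 hmn'⟩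
      exact (hfd n t (Ico_subset_Icc_self ht')).mono_of_mem_nhdsWithin (Icc_mem_nhdsGE_of_mem ht')
    · rw [hf0 m, hf0 n]
  set sol : ℝ → C(↥Γ, ℝ) := fun t => f (⌊t⌋₊ + 1) t with hsoldef
  have hsol_eq : ∀ n : ℕ, ∀ t ∈ Icc (0:ℝ) (n:ℝ), sol t = f n t := by
    intro n t ht
    have htM : t ∈ Icc (0:ℝ) ((⌊t⌋₊ + 1 : ℕ) : ℝ) :=
      ⟨ht.1, by push_cast; exact (Nat.lt_floor_add_one t).le⟩
    rcases le_total (⌊t⌋₊ + 1) n with h | h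
    · exact hcons _ n h htM
    · exact (hcons n _ h ht).symm
  have hsol0 : sol 0 = x₀ := by
    show f (⌊(0:ℝ)⌋₊ + 1) 0 = x₀
    rw [Nat.floor_zero]
    exact hf0 1
  have hsolderiv : ∀ t ∈ Ici (0:ℝ), HasDerivWithinAt sol (Fc (sol t)) (Ici 0) t := by
    intro t ht
    have htn : t < ((⌊t⌋₊ + 1 : ℕ) : ℝ) := by push_cast; exact Nat.lt_floor_add_one t
    have hmem : Icc (0:ℝ) ((⌊t⌋₊ + 1 : ℕ):ℝ) ∈ nhdsWithin t (Ici (0:ℝ)) := by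
      refine Filter.mem_of_superset (Filter.inter_mem self_mem_nhdsWithin
        (nhdsWithin_le_nhds (Iio_mem_nhds htn))) ?_
      rintro x ⟨hx1, hx2⟩; exact ⟨hx1, le_of_lt hx2⟩
    have hD := (hfd (⌊t⌋₊ + 1) t ⟨ht, htn.le⟩).mono_of_mem_nhdsWithin hmem
    have heq : sol t = f (⌊t⌋₊ + 1) t := hsol_eq (⌊t⌋₊ + 1) t ⟨ht, htn.le⟩
    rw [heq]
    refine hD.congr_of_eventuallyEq ?_ heq
    exact Filter.eventually_of_mem hmem (fun s hs => hsol_eq (⌊t⌋₊ + 1) s hs)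
  have hsolcont : ContinuousOn sol (Ici 0) := fun t ht => (hsolderiv t ht).continuousWithinAt
  have hptderiv : ∀ r : ↥Γ, ∀ t ∈ Ici (0:ℝ),
      HasDerivWithinAt (fun s => sol s r) (Fc (sol t) r) (Ici 0) t := by
    intro r t ht
    have h1 := (evC r).hasFDerivAt.comp_hasDerivWithinAt t (hsolderiv t ht)
    exact h1
  -- invariance of [0,1]
  have hinvmain : ∀ r : ↥Γ, ∀ t ∈ Ici (0:ℝ), sol t r ∈ Icc (0:ℝ) 1 := by
    intro r
    have hud : ∀ t ∈ Ici (0:ℝ), HasDerivWithinAt (fun s => sol s r) (Fc (sol t) r) (Ici 0) t :=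
      fun t ht => hptderiv r t ht
    have hucont : ContinuousOn (fun s => sol s r) (Ici 0) :=
      fun t ht => (hud t ht).continuousWithinAt
    have hlow : ∀ t ∈ Ici (0:ℝ), 0 ≤ sol t r := by
      refine nonneg_of_deriv hucont hud ?_ ?_
      · show 0 ≤ sol 0 r
        rw [hsol0]; exact (hP₀range r).1
      · intro t ht hle
        rw [hFc_apply, FF, cl_of_nonpos hle]
        have hkn : 0 ≤ kint q J (cl.comp (sol t)) r :=
          kint_nonneg (fun r' r'' => hJnn r' r'') (fun x => (cl_mem _).1) r
        simp only [sub_zero, zero_mul, one_mul]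
        linarith
    have hup : ∀ t ∈ Ici (0:ℝ), sol t r ≤ 1 := by
      have hres := nonneg_of_deriv (u := fun s => 1 - sol s r)
        (g := fun s => 0 - Fc (sol s) r)
        (continuousOn_const.sub hucont)
        (fun t ht => (hasDerivWithinAt_const t _ 1).sub (hud t ht))
        (by show 0 ≤ 1 - sol 0 r
            rw [hsol0]; have := (hP₀range r).2; exact sub_nonneg.mpr this)
        ?_
      · intro t ht
        have h5 : 0 ≤ 1 - sol t r := hres t ht
        linarith
      · intro t ht hle
        have hle' : 1 - sol t r ≤ 0 := hle
        have hone : (1:ℝ) ≤ sol t r := by linarith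
        show 0 ≤ 0 - Fc (sol t) r
        rw [hFc_apply, FF, cl_of_one_le hone]
        have hφn := hφnn (kint q W (1 - cl.comp (sol t)) r)
        simp only [sub_self, zero_mul, one_mul, zero_sub, neg_sub]
        linarith
    exact fun t ht => ⟨hlow t ht, hup t ht⟩
  have hinv : ∀ t ∈ Ici (0:ℝ), ∀ r : ↥Γ, sol t r ∈ Icc (0:ℝ) 1 :=
    fun t ht r => hinvmain r t ht
  -- rewrite the field on [0,1]-valued states
  have hFFeq : ∀ t ∈ Ici (0:ℝ), ∀ r : ↥Γ, Fc (sol t) r =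
      (1 - sol t r) * (∫ r', J r' r * sol t r' ∂q)
        - sol t r * φ (∫ r', W r' r * (1 - sol t r') ∂q) := by
    intro t ht r
    have hcl : ∀ r', cl (sol t r') = sol t r' := fun r' => cl_eq (hinv t ht r')
    rw [hFc_apply, FF]
    have e1 : kint q J (cl.comp (sol t)) r = ∫ r', J r' r * sol t r' ∂q := by
      simp only [kint, ContinuousMap.comp_apply, hcl]
    have e2 : kint q W (1 - cl.comp (sol t)) r = ∫ r', W r' r * (1 - sol t r') ∂q := by
      simp only [kint, ContinuousMap.sub_apply, ContinuousMap.one_apply,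
        ContinuousMap.comp_apply, hcl]
    rw [e1, e2, hcl]
  constructor
  · -- existence
    refine ⟨fun t r => sol t r, fun r => ?_, ?_, ?_, ?_⟩
    · show sol 0 r = P₀ r
      rw [hsol0]; rfl
    · exact continuous_eval.comp_continuousOn
        ((hsolcont.comp continuousOn_fst fun p hp => hp.1).prodMk continuousOn_snd)
    · intro r t ht
      have h := hptderiv r t ht
      rwa [hFFeq t ht r] at h
    · exact fun t ht r => hinv t ht r
  · -- uniqueness
    intro P Q hP0 hPc hPd hQ0 hQc hQd T hT r₁
    have hT' : (0:ℝ) ≤ T := hT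
    -- continuous families of slices
    have mk : ∀ R : ℝ → ↥Γ → ℝ, ContinuousOn (fun p : ℝ × ↥Γ => R p.1 p.2) (Ici 0 ×ˢ univ) →
        ∃ c : ℝ → C(↥Γ, ℝ), Continuous c ∧ ∀ t ∈ Icc (0:ℝ) T, ∀ r, c t r = R t r := by
      intro R hRc
      have hslice : ∀ t : ℝ, Continuous fun r => R (((projIcc 0 T hT' t) : ↥(Icc 0 T)) : ℝ) r := by
        intro t
        exact hRc.comp_continuous (continuous_const.prodMk continuous_id)
          (fun r => ⟨(projIcc 0 T hT' t).2.1, mem_univ r⟩)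
      refine ⟨fun t => ⟨fun r => R (((projIcc 0 T hT' t) : ↥(Icc 0 T)) : ℝ) r, hslice t⟩, ?_, ?_⟩
      · apply ContinuousMap.continuous_of_continuous_uncurry
        have hunc : Continuous fun p : ℝ × ↥Γ =>
            R (((projIcc 0 T hT' p.1) : ↥(Icc 0 T)) : ℝ) p.2 :=
          hRc.comp_continuous
            (((continuous_subtype_val.comp (continuous_projIcc (h := hT'))).comp
              continuous_fst).prodMk continuous_snd)
            (fun p => ⟨(projIcc 0 T hT' p.1).2.1, mem_univ _⟩)
        exact hunc
      · intro t ht r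
        show R (((projIcc 0 T hT' t) : ↥(Icc 0 T)) : ℝ) r = R t r
        rw [projIcc_of_mem hT' ht]
    obtain ⟨cP, hcPc, hcPeq⟩ := mk P hPc
    obtain ⟨cQ, hcQc, hcQeq⟩ := mk Q hQc
    -- uniform bound on [0, T]
    obtain ⟨M₀, hM₀⟩ := (isCompact_Icc : IsCompact (Icc (0:ℝ) T)).exists_bound_of_continuousOn
      hcPc.continuousOn
    obtain ⟨M₁, hM₁⟩ := (isCompact_Icc : IsCompact (Icc (0:ℝ) T)).exists_bound_of_continuousOn
      hcQc.continuousOn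
    set M : ℝ := max M₀ M₁ with hM
    have hM0 : 0 ≤ M :=
      (norm_nonneg (cP 0)).trans ((hM₀ 0 ⟨le_rfl, hT'⟩).trans (le_max_left _ _))
    have hPb : ∀ t ∈ Icc (0:ℝ) T, ‖cP t‖ ≤ M := fun t ht => (hM₀ t ht).trans (le_max_left _ _)
    have hQb : ∀ t ∈ Icc (0:ℝ) T, ‖cQ t‖ ≤ M := fun t ht => (hM₁ t ht).trans (le_max_right _ _)
    set KK : ℝ := (1 + 2 * M) * CJ + M * ((L : ℝ) * CW) + Cφ with hKK
    have hLCW : 0 ≤ (L:ℝ) * CW := mul_nonneg L.coe_nonneg hCW0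
    have hKK0 : 0 ≤ KK := by
      rw [hKK]
      nlinarith [mul_nonneg hM0 hLCW, mul_nonneg hM0 hCJ0]
    set hdist : ℝ → ℝ := fun t => ‖cP t - cQ t‖ with hhdef
    have hhc : Continuous hdist := (hcPc.sub hcQc).norm
    have hh0 : ∀ t, 0 ≤ hdist t := fun t => norm_nonneg _
    -- FTC for each solution
    have hFTC : ∀ (R : ℝ → ↥Γ → ℝ) (cR : ℝ → C(↥Γ, ℝ)),
        (∀ r : ↥Γ, ∀ t ∈ Ici (0:ℝ), HasDerivWithinAt (fun s => R s r)
          ((1 - R t r) * (∫ r', J r' r * R t r' ∂q)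
            - R t r * φ (∫ r', W r' r * (1 - R t r') ∂q)) (Ici 0) t) →
        ContinuousOn (fun p : ℝ × ↥Γ => R p.1 p.2) (Ici 0 ×ˢ univ) →
        Continuous cR → (∀ t ∈ Icc (0:ℝ) T, ∀ r, cR t r = R t r) →
        ∀ t ∈ Icc (0:ℝ) T, ∀ r, (∫ s in (0:ℝ)..t, frhs q J W φ cR s r) = R t r - R 0 r := by
      intro R cR hRd hRc hcRc hcReq t ht r
      refine intervalIntegral.integral_eq_sub_of_hasDeriv_right_of_le
        (f := fun s => R s r) (f' := fun s => frhs q J W φ cR s r) ht.1 ?_ ?_ ?_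
      · exact hRc.comp ((continuous_id.prodMk continuous_const).continuousOn)
          (fun s hs => ⟨hs.1, mem_univ _⟩)
      · intro s hs
        have hs0 : (0:ℝ) < s := hs.1
        have hD := (hRd r s hs0.le).hasDerivAt (Ici_mem_nhds hs0)
        have hsT : s ∈ Icc (0:ℝ) T := ⟨hs0.le, hs.2.le.trans ht.2⟩
        have h1 : ∀ r', cR s r' = R s r' := hcReq s hsT
        have e0 : frhs q J W φ cR s r =
            (1 - R s r) * (∫ r', J r' r * R s r' ∂q)
              - R s r * φ (∫ r', W r' r * (1 - R s r') ∂q) := by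
          simp only [frhs, kint, ContinuousMap.sub_apply, ContinuousMap.one_apply, h1]
        show HasDerivWithinAt (fun s' => R s' r) (frhs q J W φ cR s r) (Ioi s) s
        rw [e0]
        exact hD.hasDerivWithinAt
      · exact (frhs_continuous hJcont hWcont hJb hWb hφ.continuous hcRc r).intervalIntegrable 0 t
    have hFTCP := hFTC P cP hPd hPc hcPc hcPeq
    have hFTCQ := hFTC Q cQ hQd hQc hcQc hcQeq
    -- Lipschitz-type difference bound on the right-hand sides
    have hdiff : ∀ s ∈ Icc (0:ℝ) T, ∀ r,
        |frhs q J W φ cP s r - frhs q J W φ cQ s r| ≤ KK * hdist s := by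
      intro s hs r
      have hd1 : |cP s r - cQ s r| ≤ hdist s := by
        have := (cP s - cQ s).norm_coe_le_norm r
        simpa [Real.norm_eq_abs] using this
      have haP : |cP s r| ≤ M := by
        have := (cP s).norm_coe_le_norm r
        rw [Real.norm_eq_abs] at this
        exact this.trans (hPb s hs)
      have haQ : |cQ s r| ≤ M := by
        have := (cQ s).norm_coe_le_norm r
        rw [Real.norm_eq_abs] at this
        exact this.trans (hQb s hs)
      have hAA : |kint q J (cP s) r - kint q J (cQ s) r| ≤ CJ * hdist s :=
        kint_lip hJcont hJb _ _ r
      have hA' : |kint q J (cQ s) r| ≤ CJ * M :=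
        (kint_abs_le hJcont hJb _ r).trans (mul_le_mul_of_nonneg_left (hQb s hs) hCJ0)
      have hBB : |φ (kint q W (1 - cP s) r) - φ (kint q W (1 - cQ s) r)|
          ≤ ((L:ℝ) * CW) * hdist s := by
        have h2 := kint_lip (q := q) hWcont hWb (1 - cP s) (1 - cQ s) r
        have h3 : (1 : C(↥Γ,ℝ)) - cP s - (1 - cQ s) = -(cP s - cQ s) := by ring
        rw [h3, norm_neg] at h2
        have h4 := hφ.dist_le_mul (kint q W (1 - cP s) r) (kint q W (1 - cQ s) r)
        rw [Real.dist_eq, Real.dist_eq] at h4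
        calc |φ (kint q W (1 - cP s) r) - φ (kint q W (1 - cQ s) r)|
            ≤ (L:ℝ) * |kint q W (1 - cP s) r - kint q W (1 - cQ s) r| := h4
          _ ≤ (L:ℝ) * (CW * hdist s) := mul_le_mul_of_nonneg_left h2 L.coe_nonneg
          _ = ((L:ℝ) * CW) * hdist s := by ring
      have hB' : |φ (kint q W (1 - cQ s) r)| ≤ Cφ := by
        rw [abs_of_nonneg (hφnn _)]; exact hφbdd _
      have hkey := keyineq hM0 haP haQ hd1 hAA hA' hBB hB' (hh0 s) hCJ0 hLCW
      exact hkey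
    -- integral inequality for the pointwise difference
    have hPQ : ∀ t ∈ Icc (0:ℝ) T, ∀ r,
        |P t r - Q t r| ≤ KK * ∫ s in (0:ℝ)..t, hdist s := by
      intro t ht r
      have hIccsub : Icc (0:ℝ) t ⊆ Icc 0 T := Icc_subset_Icc le_rfl ht.2
      have hintP := (frhs_continuous (q := q) hJcont hWcont hJb hWb hφ.continuous hcPc r).intervalIntegrable (μ := volume)
        (0:ℝ) t
      have hintQ := (frhs_continuous (q := q) hJcont hWcont hJb hWb hφ.continuous hcQc r).intervalIntegrable (μ := volume)
        (0:ℝ) t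
      have e : P t r - Q t r = ∫ s in (0:ℝ)..t,
          (frhs q J W φ cP s r - frhs q J W φ cQ s r) := by
        rw [intervalIntegral.integral_sub hintP hintQ, hFTCP t ht r, hFTCQ t ht r,
          hP0 r, hQ0 r]
        ring
      rw [e]
      refine (intervalIntegral.abs_integral_le_integral_abs ht.1).trans ?_
      have hmono : (∫ s in (0:ℝ)..t, |frhs q J W φ cP s r - frhs q J W φ cQ s r|)
          ≤ ∫ s in (0:ℝ)..t, KK * hdist s := by
        refine intervalIntegral.integral_mono_on ht.1 (hintP.sub hintQ).abs
          ((continuous_const.mul hhc).intervalIntegrable 0 t)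
          (fun s hs => hdiff s (hIccsub hs) r)
      refine hmono.trans ?_
      rw [intervalIntegral.integral_const_mul]
    -- sup-norm inequality
    have hhg : ∀ t ∈ Icc (0:ℝ) T, hdist t ≤ KK * ∫ s in (0:ℝ)..t, hdist s := by
      intro t ht
      have hgnn : 0 ≤ ∫ s in (0:ℝ)..t, hdist s :=
        intervalIntegral.integral_nonneg ht.1 (fun s _ => hh0 s)
      refine (ContinuousMap.norm_le _ (mul_nonneg hKK0 hgnn)).mpr fun r => ?_
      rw [ContinuousMap.sub_apply, Real.norm_eq_abs]
      have e : cP t r - cQ t r = P t r - Q t r := by rw [hcPeq t ht r, hcQeq t ht r]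
      rw [e]
      exact hPQ t ht r
    -- Gronwall
    have hg' : ∀ t : ℝ, HasDerivAt (fun τ => ∫ s in (0:ℝ)..τ, hdist s) (hdist t) t :=
      fun t => (hhc.integral_hasStrictDerivAt 0 t).hasDerivAt
    have hgr := norm_le_gronwallBound_of_norm_deriv_right_le
      (f := fun τ => ∫ s in (0:ℝ)..τ, hdist s) (f' := hdist) (δ := 0) (K := KK) (ε := 0)
      (a := 0) (b := T)
      (fun t _ => (hg' t).continuousAt.continuousWithinAt)
      (fun t _ => (hg' t).hasDerivWithinAt)
      (by simp)
      (fun t htI => by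
        rw [Real.norm_eq_abs, Real.norm_eq_abs, abs_of_nonneg (hh0 t),
          abs_of_nonneg (intervalIntegral.integral_nonneg htI.1 (fun s _ => hh0 s)), add_zero]
        exact hhg t ⟨htI.1, htI.2.le⟩)
    have hzero : (∫ s in (0:ℝ)..T, hdist s) = 0 := by
      have h6 := hgr T ⟨hT', le_rfl⟩
      rw [gronwallBound_ε0_δ0] at h6
      have hnn : 0 ≤ ∫ s in (0:ℝ)..T, hdist s :=
        intervalIntegral.integral_nonneg hT' (fun s _ => hh0 s)
      rw [Real.norm_eq_abs, abs_of_nonneg hnn] at h6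
      linarith
    have h7 := hPQ T ⟨hT', le_rfl⟩ r₁
    rw [hzero, mul_zero] at h7
    have h8 : P T r₁ - Q T r₁ = 0 := abs_nonpos_iff.mp h7
    linarith
end

section
/- Let φ, ω : ℝ → ℝ be Lipschitz continuous and nonnegative, and let μ, ν, α, β ≥ 0. For every initial point (G₀,S₀,T₀,F₀) in the simplex Δ = {(G,S,T,F) ∈ ℝ⁴ : G,S,T,F ≥ 0, G+S+T+F = 1}, the Staver-Levin ODE system Ġ = μS + νT + φ(G)F − βGT − αGF, Ṡ = βGT − αSF − ω(G)S − μS, Ṫ = −νT − αTF + ω(G)S, Ḟ = αF(G+S+T) − φ(G)F has a unique solution defined for all t ≥ 0, and this solution remains in Δ for all t ≥ 0. -/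
open Set

namespace StaverLevinAux
open Metric
noncomputable section
abbrev E4 : Type := ℝ × ℝ × ℝ × ℝ

def cl (x : ℝ) : ℝ := max 0 (min 1 x)

lemma cl_nonneg (x : ℝ) : 0 ≤ cl x := le_max_left _ _
lemma cl_le_one (x : ℝ) : cl x ≤ 1 := max_le zero_le_one (min_le_left _ _)
lemma abs_cl_le_one (x : ℝ) : |cl x| ≤ 1 :=
  abs_le.2 ⟨by linarith [cl_nonneg x], cl_le_one x⟩
lemma cl_eq_self {x : ℝ} (h0 : 0 ≤ x) (h1 : x ≤ 1) : cl x = x := by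
  simp [cl, min_eq_right h1, max_eq_right h0]
lemma cl_eq_zero {x : ℝ} (h : x ≤ 0) : cl x = 0 :=
  max_eq_left ((min_le_right _ _).trans h)
lemma lipschitz_cl : LipschitzWith 1 cl := (LipschitzWith.id.const_min 1).const_max 0

/-- Lipschitz and bounded on a set. -/
def LB (s : Set E4) (f : E4 → ℝ) : Prop :=
  ∃ (K : NNReal) (M : ℝ), 0 ≤ M ∧ LipschitzOnWith K f s ∧ ∀ x ∈ s, |f x| ≤ M

lemma LB.const (s : Set E4) (c : ℝ) : LB s fun _ => c :=
  ⟨0, |c|, abs_nonneg c, (LipschitzWith.const c).lipschitzOnWith, fun _ _ => le_rfl⟩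

lemma LB.add {s : Set E4} {f g : E4 → ℝ} (hf : LB s f) (hg : LB s g) :
    LB s fun x => f x + g x := by
  obtain ⟨Kf, Mf, hMf0, hKf, hMf⟩ := hf
  obtain ⟨Kg, Mg, hMg0, hKg, hMg⟩ := hg
  exact ⟨Kf + Kg, Mf + Mg, by linarith, hKf.add hKg, fun x hx =>
    (abs_add_le _ _).trans (add_le_add (hMf x hx) (hMg x hx))⟩

lemma LB.neg {s : Set E4} {f : E4 → ℝ} (hf : LB s f) : LB s fun x => -(f x) := by
  obtain ⟨Kf, Mf, hMf0, hKf, hMf⟩ := hf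
  exact ⟨Kf, Mf, hMf0, hKf.neg, fun x hx => (abs_neg _).le.trans (hMf x hx)⟩

lemma LB.sub {s : Set E4} {f g : E4 → ℝ} (hf : LB s f) (hg : LB s g) :
    LB s fun x => f x - g x := by
  simpa [sub_eq_add_neg] using hf.add hg.neg

lemma LB.mul {s : Set E4} {f g : E4 → ℝ} (hf : LB s f) (hg : LB s g) :
    LB s fun x => f x * g x := by
  obtain ⟨Kf, Mf, hMf0, hKf, hMf⟩ := hf
  obtain ⟨Kg, Mg, hMg0, hKg, hMg⟩ := hg
  refine ⟨Mf.toNNReal * Kg + Mg.toNNReal * Kf, Mf * Mg, mul_nonneg hMf0 hMg0, ?_,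
    fun x hx => (abs_mul _ _).le.trans
      (mul_le_mul (hMf x hx) (hMg x hx) (abs_nonneg _) hMf0)⟩
  rw [lipschitzOnWith_iff_dist_le_mul]
  intro x hx y hy
  have h1 := (lipschitzOnWith_iff_dist_le_mul.1 hKf) x hx y hy
  have h2 := (lipschitzOnWith_iff_dist_le_mul.1 hKg) x hx y hy
  rw [Real.dist_eq] at h1 h2 ⊢
  have e1 : |f x * g x - f y * g y| ≤ |f x| * |g x - g y| + |f x - f y| * |g y| := by
    calc |f x * g x - f y * g y| = |f x * (g x - g y) + (f x - f y) * g y| := by ring_nf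
    _ ≤ |f x * (g x - g y)| + |(f x - f y) * g y| := abs_add_le _ _
    _ = |f x| * |g x - g y| + |f x - f y| * |g y| := by rw [abs_mul, abs_mul]
  have e2 : |f x| * |g x - g y| ≤ Mf * (Kg * dist x y) :=
    mul_le_mul (hMf x hx) h2 (abs_nonneg _) hMf0
  have e3 : |f x - f y| * |g y| ≤ (Kf * dist x y) * Mg :=
    mul_le_mul h1 (hMg y hy) (abs_nonneg _) (by positivity)
  have e4 : ((Mf.toNNReal * Kg + Mg.toNNReal * Kf : NNReal) : ℝ)
      = Mf * Kg + Mg * Kf := by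
    push_cast [Real.coe_toNNReal Mf hMf0, Real.coe_toNNReal Mg hMg0]
    ring
  rw [e4]
  nlinarith [dist_nonneg (x := x) (y := y)]

lemma LB.compL {s : Set E4} {f : E4 → ℝ} {Kp : NNReal} {p : ℝ → ℝ}
    (hp : LipschitzWith Kp p) (hf : LB s f) : LB s fun x => p (f x) := by
  obtain ⟨Kf, Mf, hMf0, hKf, hMf⟩ := hf
  refine ⟨Kp * Kf, |p 0| + Kp * Mf, by positivity, hp.comp_lipschitzOnWith hKf,
    fun x hx => ?_⟩
  have h1 : |p (f x) - p 0| ≤ Kp * |f x| := by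
    have := hp.dist_le_mul (f x) 0
    rwa [Real.dist_eq, Real.dist_eq, sub_zero] at this
  have h2 : |p (f x)| ≤ |p (f x) - p 0| + |p 0| := by
    calc |p (f x)| = |(p (f x) - p 0) + p 0| := by ring_nf
    _ ≤ _ := abs_add_le _ _
  have h3 : (Kp : ℝ) * |f x| ≤ Kp * Mf :=
    mul_le_mul_of_nonneg_left (hMf x hx) (by positivity)
  linarith

lemma LB.p1 {R : ℝ} (hR : 0 ≤ R) : LB (closedBall (0 : E4) R) fun p => p.1 := by
  refine ⟨1, R, hR, LipschitzWith.prod_fst.lipschitzOnWith, fun x hx => ?_⟩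
  rw [mem_closedBall_zero_iff] at hx
  exact le_trans (by rw [← Real.norm_eq_abs]; exact norm_fst_le x) hx

lemma LB.p2 {R : ℝ} (hR : 0 ≤ R) : LB (closedBall (0 : E4) R) fun p => p.2.1 := by
  refine ⟨1 * 1, R, hR,
    (LipschitzWith.prod_fst.comp LipschitzWith.prod_snd).lipschitzOnWith, fun x hx => ?_⟩
  rw [mem_closedBall_zero_iff] at hx
  refine le_trans ?_ hx
  rw [← Real.norm_eq_abs]
  exact (norm_fst_le x.2).trans (norm_snd_le x)

lemma LB.p3 {R : ℝ} (hR : 0 ≤ R) : LB (closedBall (0 : E4) R) fun p => p.2.2.1 := by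
  refine ⟨1 * (1 * 1), R, hR,
    (LipschitzWith.prod_fst.comp
      (LipschitzWith.prod_snd.comp LipschitzWith.prod_snd)).lipschitzOnWith, fun x hx => ?_⟩
  rw [mem_closedBall_zero_iff] at hx
  refine le_trans ?_ hx
  rw [← Real.norm_eq_abs]
  exact ((norm_fst_le x.2.2).trans (norm_snd_le x.2)).trans (norm_snd_le x)

lemma LB.p4 {R : ℝ} (hR : 0 ≤ R) : LB (closedBall (0 : E4) R) fun p => p.2.2.2 := by
  refine ⟨1 * (1 * 1), R, hR,
    (LipschitzWith.prod_snd.comp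
      (LipschitzWith.prod_snd.comp LipschitzWith.prod_snd)).lipschitzOnWith, fun x hx => ?_⟩
  rw [mem_closedBall_zero_iff] at hx
  refine le_trans ?_ hx
  rw [← Real.norm_eq_abs]
  exact ((norm_snd_le x.2.2).trans (norm_snd_le x.2)).trans (norm_snd_le x)


variable (φ ω : ℝ → ℝ) (μ ν α β : ℝ)

def vRaw (p : E4) : E4 :=
  (μ * p.2.1 + ν * p.2.2.1 + φ p.1 * p.2.2.2 - β * p.1 * p.2.2.1 - α * p.1 * p.2.2.2,
   β * p.1 * p.2.2.1 - α * p.2.1 * p.2.2.2 - ω p.1 * p.2.1 - μ * p.2.1,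
   -(ν * p.2.2.1) - α * p.2.2.1 * p.2.2.2 + ω p.1 * p.2.1,
   α * p.2.2.2 * (p.1 + p.2.1 + p.2.2.1) - φ p.1 * p.2.2.2)

def clP (p : E4) : E4 := (cl p.1, cl p.2.1, cl p.2.2.1, cl p.2.2.2)

def vCl (p : E4) : E4 := vRaw φ ω μ ν α β (clP p)

variable {φ ω} {Kφ Kω : NNReal}

lemma vRaw_lip (hφ : LipschitzWith Kφ φ) (hω : LipschitzWith Kω ω) {R : ℝ} (hR : 0 ≤ R) :
    ∃ K : NNReal, LipschitzOnWith K (vRaw φ ω μ ν α β) (closedBall 0 R) := by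
  have h1 := LB.p1 hR
  have h2 := LB.p2 hR
  have h3 := LB.p3 hR
  have h4 := LB.p4 hR
  have hφ1 : LB (closedBall (0:E4) R) fun p => φ p.1 := h1.compL hφ
  have hω1 : LB (closedBall (0:E4) R) fun p => ω p.1 := h1.compL hω
  have c1 : LB (closedBall (0:E4) R) fun p : E4 =>
      μ * p.2.1 + ν * p.2.2.1 + φ p.1 * p.2.2.2 - β * p.1 * p.2.2.1 - α * p.1 * p.2.2.2 :=
    (((((LB.const _ μ).mul h2).add ((LB.const _ ν).mul h3)).add (hφ1.mul h4)).sub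
      (((LB.const _ β).mul h1).mul h3)).sub (((LB.const _ α).mul h1).mul h4)
  have c2 : LB (closedBall (0:E4) R) fun p : E4 =>
      β * p.1 * p.2.2.1 - α * p.2.1 * p.2.2.2 - ω p.1 * p.2.1 - μ * p.2.1 :=
    (((((LB.const _ β).mul h1).mul h3).sub (((LB.const _ α).mul h2).mul h4)).sub
      (hω1.mul h2)).sub ((LB.const _ μ).mul h2)
  have c3 : LB (closedBall (0:E4) R) fun p : E4 =>
      -(ν * p.2.2.1) - α * p.2.2.1 * p.2.2.2 + ω p.1 * p.2.1 :=
    ((((LB.const _ ν).mul h3).neg).sub (((LB.const _ α).mul h3).mul h4)).add (hω1.mul h2)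
  have c4 : LB (closedBall (0:E4) R) fun p : E4 =>
      α * p.2.2.2 * (p.1 + p.2.1 + p.2.2.1) - φ p.1 * p.2.2.2 :=
    ((((LB.const _ α).mul h4).mul ((h1.add h2).add h3)).sub (hφ1.mul h4))
  obtain ⟨K1, M1, _, hK1, _⟩ := c1
  obtain ⟨K2, M2, _, hK2, _⟩ := c2
  obtain ⟨K3, M3, _, hK3, _⟩ := c3
  obtain ⟨K4, M4, _, hK4, _⟩ := c4
  exact ⟨_, hK1.prodMk (hK2.prodMk (hK3.prodMk hK4))⟩

lemma clP_lip : ∃ K : NNReal, LipschitzWith K clP := by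
  refine ⟨_, (lipschitz_cl.comp LipschitzWith.prod_fst).prodMk
    ((lipschitz_cl.comp (LipschitzWith.prod_fst.comp LipschitzWith.prod_snd)).prodMk
      ((lipschitz_cl.comp (LipschitzWith.prod_fst.comp
          (LipschitzWith.prod_snd.comp LipschitzWith.prod_snd))).prodMk
        (lipschitz_cl.comp (LipschitzWith.prod_snd.comp
          (LipschitzWith.prod_snd.comp LipschitzWith.prod_snd)))))⟩

lemma clP_mem (p : E4) : clP p ∈ closedBall (0 : E4) 1 := by
  rw [mem_closedBall_zero_iff]
  simp only [clP, Prod.norm_def, Real.norm_eq_abs]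
  exact max_le (abs_cl_le_one _) (max_le (abs_cl_le_one _)
    (max_le (abs_cl_le_one _) (abs_cl_le_one _)))

lemma vCl_lip (hφ : LipschitzWith Kφ φ) (hω : LipschitzWith Kω ω) :
    ∃ K : NNReal, LipschitzWith K (vCl φ ω μ ν α β) := by
  obtain ⟨K1, h1⟩ := vRaw_lip μ ν α β hφ hω (zero_le_one)
  obtain ⟨K2, h2⟩ := clP_lip
  refine ⟨K1 * K2, ?_⟩
  rw [← lipschitzOnWith_univ]
  exact h1.comp h2.lipschitzOnWith (fun p _ => clP_mem p)

lemma vCl_bound (hφ : LipschitzWith Kφ φ) (hω : LipschitzWith Kω ω) :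
    ∃ C : ℝ, 0 ≤ C ∧ ∀ p, ‖vCl φ ω μ ν α β p‖ ≤ C := by
  obtain ⟨K, hK⟩ := vRaw_lip μ ν α β hφ hω (zero_le_one (α := ℝ))
  refine ⟨‖vRaw φ ω μ ν α β (clP 0)‖ + K * 2, by positivity, fun p => ?_⟩
  have h1 : dist (vRaw φ ω μ ν α β (clP p)) (vRaw φ ω μ ν α β (clP 0))
      ≤ K * dist (clP p) (clP 0) :=
    (lipschitzOnWith_iff_dist_le_mul.1 hK) _ (clP_mem p) _ (clP_mem 0)
  have h2 : dist (clP p) (clP 0) ≤ 2 := by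
    have a1 := clP_mem p
    have a2 := clP_mem 0
    rw [mem_closedBall] at a1 a2
    calc dist (clP p) (clP 0) ≤ dist (clP p) 0 + dist 0 (clP 0) := dist_triangle _ _ _
    _ ≤ 1 + 1 := add_le_add a1 (by rwa [dist_comm])
    _ = 2 := by norm_num
  have h3 : ‖vCl φ ω μ ν α β p‖
      ≤ ‖vRaw φ ω μ ν α β (clP 0)‖ + dist (vRaw φ ω μ ν α β (clP p)) (vRaw φ ω μ ν α β (clP 0)) := by
    rw [vCl]
    calc ‖vRaw φ ω μ ν α β (clP p)‖ = dist (vRaw φ ω μ ν α β (clP p)) 0 := by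
          rw [dist_zero_right]
    _ ≤ dist (vRaw φ ω μ ν α β (clP p)) (vRaw φ ω μ ν α β (clP 0))
        + dist (vRaw φ ω μ ν α β (clP 0)) 0 := dist_triangle _ _ _
    _ = _ := by rw [dist_zero_right]; ring
  have h4 : (K : ℝ) * dist (clP p) (clP 0) ≤ K * 2 :=
    mul_le_mul_of_nonneg_left h2 (by positivity)
  linarith


/-- Global forward solution for a globally Lipschitz, bounded field. -/
lemma exists_global_sol (v : E4 → E4) (hl : ∃ K : NNReal, LipschitzWith K v)
    (hb : ∃ C : ℝ, 0 ≤ C ∧ ∀ p, ‖v p‖ ≤ C) (x₀ : E4) :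
    ∃ X : ℝ → E4, X 0 = x₀ ∧ ∀ t ∈ Ici (0:ℝ), HasDerivWithinAt X (v (X t)) (Ici 0) t := by
  obtain ⟨K, hK⟩ := hl
  obtain ⟨C, hC0, hC⟩ := hb
  have sol : ∀ n : ℕ, ∃ f : ℝ → E4, f 0 = x₀ ∧
      ∀ t ∈ Icc (0:ℝ) (n+1), HasDerivWithinAt f (v (f t)) (Icc 0 (n+1)) t := by
    intro n
    have hpl : IsPicardLindelof (fun _ x => v x) (tmin := 0) (tmax := (n:ℝ)+1)
        ⟨0, le_refl 0, by positivity⟩ x₀ (C.toNNReal * ((n:NNReal)+1)) 0 C.toNNReal K := by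
      refine IsPicardLindelof.of_time_independent
        (fun x _ => (hC x).trans (Real.le_coe_toNNReal C)) hK.lipschitzOnWith ?_
      simp only [sub_zero, NNReal.coe_mul, NNReal.coe_add, NNReal.coe_natCast, NNReal.coe_one,
        Real.coe_toNNReal _ hC0, NNReal.coe_zero]
      rw [max_eq_left (by positivity : (0:ℝ) ≤ (n:ℝ)+1)]
    exact hpl.exists_eq_forall_mem_Icc_hasDerivWithinAt₀
  choose fn hfn0 hfnd using sol
  have agree : ∀ a b : ℕ, ∀ t ∈ Icc (0:ℝ) (min ((a:ℝ)+1) ((b:ℝ)+1)), fn a t = fn b t := by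
    intro a b
    have hma : min ((a:ℝ)+1) ((b:ℝ)+1) ≤ (a:ℝ)+1 := min_le_left _ _
    have hmb : min ((a:ℝ)+1) ((b:ℝ)+1) ≤ (b:ℝ)+1 := min_le_right _ _
    refine ODE_solution_unique_of_mem_Icc_right
      (v := fun _ x => v x) (s := fun _ => univ) (K := K)
      (fun _ _ => hK.lipschitzOnWith) ?_ ?_ (fun _ _ => mem_univ _) ?_ ?_
      (fun _ _ => mem_univ _) (by rw [hfn0, hfn0])
    · exact fun t ht => ((hfnd a t ⟨ht.1, ht.2.trans hma⟩).continuousWithinAt).mono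
        (Icc_subset_Icc le_rfl hma)
    · intro t ht
      exact (hfnd a t ⟨ht.1, (ht.2.le.trans hma)⟩).mono_of_mem_nhdsWithin
        (Icc_mem_nhdsGE_of_mem ⟨ht.1, lt_of_lt_of_le ht.2 hma⟩)
    · exact fun t ht => ((hfnd b t ⟨ht.1, ht.2.trans hmb⟩).continuousWithinAt).mono
        (Icc_subset_Icc le_rfl hmb)
    · intro t ht
      exact (hfnd b t ⟨ht.1, (ht.2.le.trans hmb)⟩).mono_of_mem_nhdsWithin
        (Icc_mem_nhdsGE_of_mem ⟨ht.1, lt_of_lt_of_le ht.2 hmb⟩)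
  set X : ℝ → E4 := fun t => fn ⌊t⌋₊ t with hX
  have hXfn : ∀ (n : ℕ) (t : ℝ), t ∈ Icc (0:ℝ) ((n:ℝ)+1) → X t = fn n t := by
    intro n t ht
    exact agree ⌊t⌋₊ n t ⟨ht.1, le_min (Nat.lt_floor_add_one t).le ht.2⟩
  refine ⟨X, ?_, ?_⟩
  · show fn ⌊(0:ℝ)⌋₊ 0 = x₀
    rw [Nat.floor_zero]
    exact hfn0 0
  · intro t ht
    set n := ⌊t⌋₊ with hn
    have h1 : t ∈ Icc (0:ℝ) ((n:ℝ)+1) := ⟨ht, (Nat.lt_floor_add_one t).le⟩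
    have hd := hfnd n t h1
    have he : ∀ u ∈ Icc (0:ℝ) ((n:ℝ)+1), X u = fn n u := hXfn n
    have hd' : HasDerivWithinAt X (v (fn n t)) (Icc 0 ((n:ℝ)+1)) t :=
      hd.congr he (he t h1)
    have hd'' : HasDerivWithinAt X (v (X t)) (Icc 0 ((n:ℝ)+1)) t := by
      rw [hXfn n t h1]; exact hd'
    refine hd''.mono_of_mem_nhdsWithin ?_
    refine Filter.mem_of_superset (Filter.inter_mem
      (mem_nhdsWithin_of_mem_nhds (Iio_mem_nhds (Nat.lt_floor_add_one t)))
      self_mem_nhdsWithin) ?_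
    rintro u ⟨hu1, hu2⟩
    exact ⟨hu2, hu1.le⟩

/-- 1-D forward invariance of the nonnegative half-line. -/
lemma nonneg_forward {g d : ℝ → ℝ}
    (hder : ∀ t ∈ Ici (0:ℝ), HasDerivWithinAt g (d t) (Ici 0) t)
    (h0 : 0 ≤ g 0) (hd : ∀ t ∈ Ici (0:ℝ), g t ≤ 0 → 0 ≤ d t) :
    ∀ t ∈ Ici (0:ℝ), 0 ≤ g t := by
  intro t₁ ht₁
  by_contra hneg
  push_neg at hneg
  have hcont : ContinuousOn g (Ici 0) := fun u hu => (hder u hu).continuousWithinAt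
  have ht₁pos : (0:ℝ) < t₁ := by
    rcases eq_or_lt_of_le (show (0:ℝ) ≤ t₁ from ht₁) with h | h
    · exfalso; rw [← h] at hneg; linarith
    · exact h
  set A := Icc (0:ℝ) t₁ ∩ g ⁻¹' (Ici 0) with hA
  have hA0 : (0:ℝ) ∈ A := ⟨⟨le_refl 0, ht₁pos.le⟩, h0⟩
  have hAne : A.Nonempty := ⟨0, hA0⟩
  have hAbdd : BddAbove A := BddAbove.mono (fun u hu => hu.1) bddAbove_Icc
  have hAcl : IsClosed A :=
    (hcont.mono (Icc_subset_Ici_self)).preimage_isClosed_of_isClosed isClosed_Icc isClosed_Ici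
  set s := sSup A with hs
  have hsA : s ∈ A := hAcl.csSup_mem hAne hAbdd
  obtain ⟨⟨hs0, hst₁⟩, hgs⟩ := hsA
  have hslt : s < t₁ := lt_of_le_of_ne hst₁ (by
    intro h; rw [h] at hgs; exact absurd hneg (not_lt.2 hgs))
  have hgneg : ∀ u ∈ Ioc s t₁, g u < 0 := by
    intro u hu
    by_contra hge
    push_neg at hge
    have : u ∈ A := ⟨⟨hs0.trans hu.1.le, hu.2⟩, hge⟩
    exact absurd (le_csSup hAbdd this) (not_le.2 hu.1)
  have hsub : Icc s t₁ ⊆ Ici 0 := fun u hu => hs0.trans hu.1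
  have hda : ∀ u ∈ Ioo s t₁, HasDerivAt g (d u) u := by
    intro u hu
    have hu0 : (0:ℝ) < u := lt_of_le_of_lt hs0 hu.1
    exact (hder u hu0.le).hasDerivAt (Ici_mem_nhds hu0)
  have hmono : MonotoneOn g (Icc s t₁) := by
    apply monotoneOn_of_deriv_nonneg (convex_Icc s t₁) (hcont.mono hsub)
    · rw [interior_Icc]
      exact fun u hu => ((hda u hu).differentiableAt).differentiableWithinAt
    · rw [interior_Icc]
      intro u hu
      rw [(hda u hu).deriv]
      exact hd u (hs0.trans hu.1.le) (hgneg u ⟨hu.1, hu.2.le⟩).le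
  have h5 : g s ≤ g t₁ := hmono ⟨le_refl s, hslt.le⟩ ⟨hslt.le, le_refl t₁⟩ hslt.le
  have hgs' : (0:ℝ) ≤ g s := hgs
  linarith


end
end StaverLevinAux


open StaverLevinAux

/-- The Staver-Levin ODE system, as a property of four functions on `[0,∞)`. -/
def IsStaverLevinSolution (φ ω : ℝ → ℝ) (μ ν α β : ℝ) (G S T F : ℝ → ℝ) : Prop :=
  ∀ t ∈ Ici (0:ℝ),
    HasDerivWithinAt G
      (μ * S t + ν * T t + φ (G t) * F t - β * G t * T t - α * G t * F t) (Ici 0) t ∧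
    HasDerivWithinAt S
      (β * G t * T t - α * S t * F t - ω (G t) * S t - μ * S t) (Ici 0) t ∧
    HasDerivWithinAt T
      (-(ν * T t) - α * T t * F t + ω (G t) * S t) (Ici 0) t ∧
    HasDerivWithinAt F
      (α * F t * (G t + S t + T t) - φ (G t) * F t) (Ici 0) t

/-- For Lipschitz nonnegative `φ, ω` and nonnegative parameters, the
Staver-Levin ODE system has, for every initial point in the probability simplex
`Δ = {(G,S,T,F) : G,S,T,F ≥ 0, G+S+T+F = 1}`, a solution defined for all `t ≥ 0` which
remains in `Δ`, and any two solutions with this initial point agree for all `t ≥ 0`. -/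
theorem staver_levin_wellposed_simplex
    (φ ω : ℝ → ℝ) (Kφ Kω : NNReal)
    (hφ : LipschitzWith Kφ φ) (hω : LipschitzWith Kω ω)
    (hφnn : ∀ x : ℝ, 0 ≤ φ x) (hωnn : ∀ x : ℝ, 0 ≤ ω x)
    (μ ν α β : ℝ) (hμ : 0 ≤ μ) (hν : 0 ≤ ν) (hα : 0 ≤ α) (hβ : 0 ≤ β)
    (G₀ S₀ T₀ F₀ : ℝ)
    (h0 : 0 ≤ G₀ ∧ 0 ≤ S₀ ∧ 0 ≤ T₀ ∧ 0 ≤ F₀ ∧ G₀ + S₀ + T₀ + F₀ = 1) :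
    ∃ G S T F : ℝ → ℝ,
      (G 0 = G₀ ∧ S 0 = S₀ ∧ T 0 = T₀ ∧ F 0 = F₀) ∧
      IsStaverLevinSolution φ ω μ ν α β G S T F ∧
      (∀ t ∈ Ici (0:ℝ),
        0 ≤ G t ∧ 0 ≤ S t ∧ 0 ≤ T t ∧ 0 ≤ F t ∧ G t + S t + T t + F t = 1) ∧
      (∀ G' S' T' F' : ℝ → ℝ,
        (G' 0 = G₀ ∧ S' 0 = S₀ ∧ T' 0 = T₀ ∧ F' 0 = F₀) →
        IsStaverLevinSolution φ ω μ ν α β G' S' T' F' →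
        ∀ t ∈ Ici (0:ℝ), G' t = G t ∧ S' t = S t ∧ T' t = T t ∧ F' t = F t) := by
  obtain ⟨hG0, hS0, hT0, hF0, hsum0⟩ := h0
  obtain ⟨X, hX0, hXd⟩ := exists_global_sol (vCl φ ω μ ν α β)
    (vCl_lip μ ν α β hφ hω) (vCl_bound μ ν α β hφ hω) ((G₀, S₀, T₀, F₀) : E4)
  -- component derivatives, in clamped form
  have hGd : ∀ t ∈ Ici (0:ℝ), HasDerivWithinAt (fun u => (X u).1)
      (μ * cl ((X t).2.1) + ν * cl ((X t).2.2.1) + φ (cl ((X t).1)) * cl ((X t).2.2.2)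
        - β * cl ((X t).1) * cl ((X t).2.2.1) - α * cl ((X t).1) * cl ((X t).2.2.2))
      (Ici 0) t := fun t ht =>
    (ContinuousLinearMap.fst ℝ ℝ (ℝ×ℝ×ℝ)).hasFDerivAt.comp_hasDerivWithinAt t (hXd t ht)
  have hSd : ∀ t ∈ Ici (0:ℝ), HasDerivWithinAt (fun u => (X u).2.1)
      (β * cl ((X t).1) * cl ((X t).2.2.1) - α * cl ((X t).2.1) * cl ((X t).2.2.2)
        - ω (cl ((X t).1)) * cl ((X t).2.1) - μ * cl ((X t).2.1))
      (Ici 0) t := fun t ht =>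
    ((ContinuousLinearMap.fst ℝ ℝ (ℝ×ℝ)).comp
      (ContinuousLinearMap.snd ℝ ℝ (ℝ×ℝ×ℝ))).hasFDerivAt.comp_hasDerivWithinAt t (hXd t ht)
  have hTd : ∀ t ∈ Ici (0:ℝ), HasDerivWithinAt (fun u => (X u).2.2.1)
      (-(ν * cl ((X t).2.2.1)) - α * cl ((X t).2.2.1) * cl ((X t).2.2.2)
        + ω (cl ((X t).1)) * cl ((X t).2.1))
      (Ici 0) t := fun t ht =>
    ((ContinuousLinearMap.fst ℝ ℝ ℝ).comp ((ContinuousLinearMap.snd ℝ ℝ (ℝ×ℝ)).comp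
      (ContinuousLinearMap.snd ℝ ℝ (ℝ×ℝ×ℝ)))).hasFDerivAt.comp_hasDerivWithinAt t (hXd t ht)
  have hFd : ∀ t ∈ Ici (0:ℝ), HasDerivWithinAt (fun u => (X u).2.2.2)
      (α * cl ((X t).2.2.2) * (cl ((X t).1) + cl ((X t).2.1) + cl ((X t).2.2.1))
        - φ (cl ((X t).1)) * cl ((X t).2.2.2))
      (Ici 0) t := fun t ht =>
    ((ContinuousLinearMap.snd ℝ ℝ ℝ).comp ((ContinuousLinearMap.snd ℝ ℝ (ℝ×ℝ)).comp
      (ContinuousLinearMap.snd ℝ ℝ (ℝ×ℝ×ℝ)))).hasFDerivAt.comp_hasDerivWithinAt t (hXd t ht)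
  -- nonnegativity of the components
  have hGnn : ∀ t ∈ Ici (0:ℝ), 0 ≤ (X t).1 := by
    refine nonneg_forward hGd (by rw [hX0]; exact hG0) ?_
    intro t ht hle
    rw [cl_eq_zero hle]
    simp only [mul_zero, zero_mul, sub_zero]
    have a1 : 0 ≤ μ * cl ((X t).2.1) := mul_nonneg hμ (cl_nonneg _)
    have a2 : 0 ≤ ν * cl ((X t).2.2.1) := mul_nonneg hν (cl_nonneg _)
    have a3 : 0 ≤ φ 0 * cl ((X t).2.2.2) := mul_nonneg (hφnn 0) (cl_nonneg _)
    linarith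
  have hSnn : ∀ t ∈ Ici (0:ℝ), 0 ≤ (X t).2.1 := by
    refine nonneg_forward hSd (by rw [hX0]; exact hS0) ?_
    intro t ht hle
    rw [cl_eq_zero hle]
    simp only [mul_zero, zero_mul, sub_zero]
    exact mul_nonneg (mul_nonneg hβ (cl_nonneg _)) (cl_nonneg _)
  have hTnn : ∀ t ∈ Ici (0:ℝ), 0 ≤ (X t).2.2.1 := by
    refine nonneg_forward hTd (by rw [hX0]; exact hT0) ?_
    intro t ht hle
    rw [cl_eq_zero hle]
    simp only [mul_zero, zero_mul, sub_zero, neg_zero, zero_add, zero_sub, neg_neg]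
    exact mul_nonneg (hωnn _) (cl_nonneg _)
  have hFnn : ∀ t ∈ Ici (0:ℝ), 0 ≤ (X t).2.2.2 := by
    refine nonneg_forward hFd (by rw [hX0]; exact hF0) ?_
    intro t ht hle
    rw [cl_eq_zero hle]
    simp only [mul_zero, zero_mul, sub_zero]
    exact le_refl 0
  -- conservation of the total
  have hXsum : ∀ t ∈ Ici (0:ℝ),
      (X t).1 + (X t).2.1 + (X t).2.2.1 + (X t).2.2.2 = 1 := by
    have hd0 : ∀ t ∈ Ici (0:ℝ), HasDerivWithinAt
        (fun u => (X u).1 + (X u).2.1 + (X u).2.2.1 + (X u).2.2.2) 0 (Ici 0) t := by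
      intro t ht
      have h := (((hGd t ht).add (hSd t ht)).add (hTd t ht)).add (hFd t ht)
      exact h.congr_deriv (by ring)
    intro t ht
    have hcc : ContinuousOn
        (fun u => (X u).1 + (X u).2.1 + (X u).2.2.1 + (X u).2.2.2) (Icc 0 t) :=
      fun u hu => ((hd0 u hu.1).continuousWithinAt).mono (fun z hz => hz.1)
    have hconst := constant_of_has_deriv_right_zero hcc
      (fun x hx => (hd0 x hx.1).mono (Ici_subset_Ici.2 hx.1))
    have h1 : (X t).1 + (X t).2.1 + (X t).2.2.1 + (X t).2.2.2
        = (X 0).1 + (X 0).2.1 + (X 0).2.2.1 + (X 0).2.2.2 := hconst t ⟨ht, le_refl t⟩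
    rw [h1, hX0]
    exact hsum0
  -- clamps are the identity along the solution
  have hcl : ∀ t ∈ Ici (0:ℝ), cl ((X t).1) = (X t).1 ∧ cl ((X t).2.1) = (X t).2.1 ∧
      cl ((X t).2.2.1) = (X t).2.2.1 ∧ cl ((X t).2.2.2) = (X t).2.2.2 := by
    intro t ht
    have h1 := hGnn t ht; have h2 := hSnn t ht; have h3 := hTnn t ht
    have h4 := hFnn t ht; have h5 := hXsum t ht
    exact ⟨cl_eq_self h1 (by linarith), cl_eq_self h2 (by linarith),
      cl_eq_self h3 (by linarith), cl_eq_self h4 (by linarith)⟩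
  refine ⟨fun t => (X t).1, fun t => (X t).2.1, fun t => (X t).2.2.1, fun t => (X t).2.2.2,
    ⟨by show (X 0).1 = G₀; rw [hX0], by show (X 0).2.1 = S₀; rw [hX0],
      by show (X 0).2.2.1 = T₀; rw [hX0], by show (X 0).2.2.2 = F₀; rw [hX0]⟩, ?_, ?_, ?_⟩
  · -- it is a solution of the Staver-Levin system
    intro t ht
    obtain ⟨e1, e2, e3, e4⟩ := hcl t ht
    refine ⟨?_, ?_, ?_, ?_⟩
    · have h := hGd t ht; rw [e1, e2, e3, e4] at h; exact h
    · have h := hSd t ht; rw [e1, e2, e3, e4] at h; exact h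
    · have h := hTd t ht; rw [e1, e2, e3, e4] at h; exact h
    · have h := hFd t ht; rw [e1, e2, e3, e4] at h; exact h
  · exact fun t ht => ⟨hGnn t ht, hSnn t ht, hTnn t ht, hFnn t ht, hXsum t ht⟩
  · -- uniqueness
    intro G' S' T' F' hinit' hsol' τ hτ
    set Y' : ℝ → E4 := fun u => (G' u, S' u, T' u, F' u) with hY'
    have hc : ContinuousOn Y' (Icc 0 τ) := by
      intro u hu
      have h := hsol' u hu.1
      exact ((h.1.continuousWithinAt.mono (fun z hz => hz.1)).prodMk
        ((h.2.1.continuousWithinAt.mono (fun z hz => hz.1)).prodMk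
          ((h.2.2.1.continuousWithinAt.mono (fun z hz => hz.1)).prodMk
            (h.2.2.2.continuousWithinAt.mono (fun z hz => hz.1)))))
    have hcX : ContinuousOn X (Icc 0 τ) :=
      fun u hu => ((hXd u hu.1).continuousWithinAt).mono (fun z hz => hz.1)
    obtain ⟨R1, hR1⟩ := isCompact_Icc.exists_bound_of_continuousOn hc
    obtain ⟨R2, hR2⟩ := isCompact_Icc.exists_bound_of_continuousOn hcX
    set R : ℝ := max 0 (max R1 R2) with hR
    obtain ⟨K, hK⟩ := vRaw_lip (φ := φ) (ω := ω) μ ν α β hφ hω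
      (le_max_left 0 (max R1 R2))
    have key : EqOn Y' X (Icc 0 τ) := by
      refine ODE_solution_unique_of_mem_Icc_right
        (v := fun _ x => vRaw φ ω μ ν α β x) (s := fun _ => Metric.closedBall 0 R)
        (fun _ _ => hK) hc ?_ ?_ hcX ?_ ?_ ?_
      · intro u hu
        have h := hsol' u hu.1
        have hY'd : HasDerivWithinAt Y' (vRaw φ ω μ ν α β (Y' u)) (Ici 0) u :=
          h.1.prodMk (h.2.1.prodMk (h.2.2.1.prodMk h.2.2.2))
        exact hY'd.mono (Ici_subset_Ici.2 hu.1)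
      · intro u hu
        rw [Metric.mem_closedBall, dist_zero_right]
        exact (hR1 u ⟨hu.1, hu.2.le⟩).trans
          ((le_max_left R1 R2).trans (le_max_right 0 (max R1 R2)))
      · intro u hu
        have h := hXd u hu.1
        have hcleq : clP (X u) = X u := by
          obtain ⟨e1, e2, e3, e4⟩ := hcl u hu.1
          show (cl ((X u).1), cl ((X u).2.1), cl ((X u).2.2.1), cl ((X u).2.2.2)) = X u
          rw [e1, e2, e3, e4]
        have h2 : HasDerivWithinAt X (vRaw φ ω μ ν α β (X u)) (Ici 0) u := by
          rw [← hcleq]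
          exact h
        exact h2.mono (Ici_subset_Ici.2 hu.1)
      · intro u hu
        rw [Metric.mem_closedBall, dist_zero_right]
        exact (hR2 u ⟨hu.1, hu.2.le⟩).trans
          ((le_max_right R1 R2).trans (le_max_right 0 (max R1 R2)))
      · show (G' 0, S' 0, T' 0, F' 0) = X 0
        rw [hX0, hinit'.1, hinit'.2.1, hinit'.2.2.1, hinit'.2.2.2]
    have hfin := key ⟨hτ, le_refl τ⟩
    exact ⟨congrArg (fun p : E4 => p.1) hfin, congrArg (fun p : E4 => p.2.1) hfin,
      congrArg (fun p : E4 => p.2.2.1) hfin, congrArg (fun p : E4 => p.2.2.2) hfin⟩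
end
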